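/- arXiv:math/0507399 — 11 statements merged into one kernel-verified Lean document; each statement's English description precedes it below -/
import Mathlib

section
/- Let X, Y ∈ GL_n(k) with X² = Y³ = I such that Λ = XYXY² and Γ = XY²XY commute. Then (XY)⁶ = I and (YX)⁶ = I. -/
open Matrix

lemma aux_word {M : Type*} [Monoid M] (X Y : M)
    (hX2 : X ^ 2 = 1) (hY3 : Y ^ 3 = 1)
    (hcomm : (X * Y * X * Y ^ 2) * (X * Y ^ 2 * X * Y)
           = (X * Y ^ 2 * X * Y) * (X * Y * X * Y ^ 2)) :
    (X * Y) ^ 6 = 1 ∧ (Y * X) ^ 6 = 1 := by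
  have hX : X * X = 1 := by rw [← sq]; exact hX2
  have hY : Y * (Y * Y) = 1 := by simpa [pow_succ, mul_assoc] using hY3
  have hx1 : ∀ w : M, X * (X * w) = w := fun w => by rw [← mul_assoc, hX, one_mul]
  have hy1 : ∀ w : M, Y * (Y * (Y * w)) = w := fun w => by
    rw [← mul_assoc, ← mul_assoc, mul_assoc Y Y, hY, one_mul]
  have h6 : (Y * X) ^ 6 = 1 := by
    have e : (Y * X) ^ 6
        = (Y * X) ^ 3 * (Y * ((Y * X) * ((X * Y ^ 2 * X * Y) * (X * Y * X * Y ^ 2)) * Y)) := by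
      simp [pow_succ, pow_zero, mul_assoc, hx1, hy1, hX, hY, mul_one, one_mul]
    rw [e, ← hcomm]
    simp [pow_succ, pow_zero, mul_assoc, hx1, hy1, hX, hY, mul_one, one_mul]
  refine ⟨?_, h6⟩
  have e2 : (X * Y) ^ 6 = X * ((Y * X) ^ 6 * X) := by
    simp [pow_succ, pow_zero, mul_assoc, hx1, hX, mul_one, one_mul]
  rw [e2, h6, one_mul, hX]

theorem stmt_5 {k : Type*} [Field k] {n : ℕ}
    (X Y : Matrix (Fin n) (Fin n) k) (hX : IsUnit X) (hY : IsUnit Y)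
    (hX2 : X ^ 2 = 1) (hY3 : Y ^ 3 = 1)
    (hcomm : (X * Y * X * Y ^ 2) * (X * Y ^ 2 * X * Y)
           = (X * Y ^ 2 * X * Y) * (X * Y * X * Y ^ 2)) :
    (X * Y) ^ 6 = 1 ∧ (Y * X) ^ 6 = 1 :=
  aux_word X Y hX2 hY3 hcomm
end

section
/- Let X, Y ∈ GL_n(k) with X² = Y³ = I, Λ = XYXY² diagonal, and Γ = XY²XY diagonal. If X has a nonzero entry in position (i,j), then Λ_{ii} · Λ_{jj} = 1. -/
open Matrix

theorem stmt_6 {k : Type*} [Field k] {n : ℕ}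
    (X Y : Matrix (Fin n) (Fin n) k) (hX : IsUnit X) (hY : IsUnit Y)
    (hX2 : X ^ 2 = 1) (hY3 : Y ^ 3 = 1)
    (hΛ : (X * Y * X * Y ^ 2).IsDiag) (hΓ : (X * Y ^ 2 * X * Y).IsDiag)
    (i j : Fin n) (hij : X i j ≠ 0) :
    (X * Y * X * Y ^ 2) i i * (X * Y * X * Y ^ 2) j j = 1 := by
  set Λ := X * Y * X * Y ^ 2 with hΛdef
  have hx : X * X = 1 := by rw [← sq]; exact hX2
  have hy : Y * (Y * Y) = 1 := by rw [← hY3]; noncomm_ring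
  have key : Λ * X * Λ = X := by
    have : Λ * X * Λ = X * Y * X * (Y ^ 2 * (X * X) * Y) * X * Y ^ 2 := by
      rw [hΛdef]; noncomm_ring
    rw [this, hx, mul_one]
    have h2 : Y ^ 2 * Y = 1 := by rw [← pow_succ]; exact hY3
    rw [h2, mul_one]
    calc X * Y * X * X * Y ^ 2 = X * Y * (X * X) * Y ^ 2 := by noncomm_ring
      _ = X * (Y * (Y * Y)) := by rw [hx, mul_one]; noncomm_ring
      _ = X := by rw [hy, mul_one]
  have hentry : (Λ * X * Λ) i j = Λ i i * X i j * Λ j j := by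
    rw [Matrix.mul_apply]
    rw [Finset.sum_eq_single j]
    · rw [Matrix.mul_apply, Finset.sum_eq_single i]
      · intro b _ hb; rw [hΛ (Ne.symm hb), zero_mul]
      · intro h; exact absurd (Finset.mem_univ i) h
    · intro b _ hb; rw [hΛ hb, mul_zero]
    · intro h; exact absurd (Finset.mem_univ j) h
  rw [key] at hentry
  have : Λ i i * Λ j j * X i j = 1 * X i j := by
    rw [one_mul]; linear_combination -hentry
  exact mul_right_cancel₀ hij this
end

section
/- Let X, Y ∈ GL_n(k) with X² = Y³ = I, Λ = XYXY² diagonal, and Γ = XY²XY diagonal. If Y has a nonzero entry in position (i,j), then Λ_{ii} · Γ_{jj} = 1. -/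
open Matrix

theorem stmt_7 {k : Type*} [Field k] {n : ℕ}
    (X Y : Matrix (Fin n) (Fin n) k) (hX : IsUnit X) (hY : IsUnit Y)
    (hX2 : X ^ 2 = 1) (hY3 : Y ^ 3 = 1)
    (hΛ : (X * Y * X * Y ^ 2).IsDiag) (hΓ : (X * Y ^ 2 * X * Y).IsDiag)
    (i j : Fin n) (hij : Y i j ≠ 0) :
    (X * Y * X * Y ^ 2) i i * (X * Y ^ 2 * X * Y) j j = 1 := by
  set Λ := X * Y * X * Y ^ 2 with hΛdef
  set Γ := X * Y ^ 2 * X * Y with hΓdef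
  have hXX : ∀ M : Matrix (Fin n) (Fin n) k, X * (X * M) = M := fun M => by
    rw [← mul_assoc, ← sq, hX2, one_mul]
  have h1 : ∀ M : Matrix (Fin n) (Fin n) k, Y ^ 2 * (Y * M) = M := fun M => by
    rw [← mul_assoc, ← pow_succ, hY3, one_mul]
  have h2 : ∀ M : Matrix (Fin n) (Fin n) k, Y * (Y ^ 2 * M) = M := fun M => by
    rw [← mul_assoc, ← pow_succ', hY3, one_mul]
  have key : Λ * Y * Γ = Y := by
    rw [hΛdef, hΓdef]
    simp only [mul_assoc]
    rw [h1, hXX, h2, hXX]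
  have entry : (Λ * Y * Γ) i j = Λ i i * Y i j * Γ j j := by
    have hh : (Λ * Y) i j = Λ i i * Y i j := by
      rw [Matrix.mul_apply, Finset.sum_eq_single i]
      · intro b _ hb; rw [hΛ (Ne.symm hb), zero_mul]
      · intro h; exact absurd (Finset.mem_univ i) h
    rw [Matrix.mul_apply, Finset.sum_eq_single j]
    · rw [hh]
    · intro b _ hb; rw [hΓ hb, mul_zero]
    · intro h; exact absurd (Finset.mem_univ j) h
  rw [key] at entry
  apply mul_right_cancel₀ hij
  rw [one_mul]
  calc Λ i i * Γ j j * Y i j = Λ i i * Y i j * Γ j j := by ring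
    _ = Y i j := entry.symm
end

section
/- Let X, Y ∈ GL_2(k) over an algebraically closed field k with X² = Y³ = I, such that Λ = XYXY² and Γ = XY²XY are diagonal, and the pair (X,Y) spans M_2(k) as a k-algebra. Then both X and Y have exactly one nonzero entry per row and per column. -/
open Matrix

-- test the monomial lemma
lemma aux_monomial {k : Type*} [Field k] (M D E : Matrix (Fin 2) (Fin 2) k)
    (hM : IsUnit M) (hD : D.IsDiag) (hE : E.IsDiag) (hne : D 0 0 ≠ D 1 1)
    (h : M * D = E * M) :
    (∀ i, ∃! j, M i j ≠ 0) ∧ (∀ j, ∃! i, M i j ≠ 0) := by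
  have hdet : M.det ≠ 0 := by
    have := (Matrix.isUnit_iff_isUnit_det M).mp hM
    exact this.ne_zero
  rw [Matrix.det_fin_two] at hdet
  have htwo : ∀ i : Fin 2, i = 0 ∨ i = 1 := by decide
  have d01 : D 0 1 = 0 := hD (by decide)
  have d10 : D 1 0 = 0 := hD (by decide)
  have e01 : E 0 1 = 0 := hE (by decide)
  have e10 : E 1 0 = 0 := hE (by decide)
  have key : ∀ i j, M i j * D j j = E i i * M i j := by
    intro i j
    have hh := congrFun (congrFun h i) j
    rw [Matrix.mul_apply, Matrix.mul_apply, Fin.sum_univ_two, Fin.sum_univ_two] at hh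
    rcases htwo i with rfl | rfl <;> rcases htwo j with rfl | rfl <;>
      simp only [d01, d10, e01, e10, mul_zero, zero_mul, add_zero, zero_add] at hh <;>
      linear_combination hh
  have row : ∀ i : Fin 2, M i 0 = 0 ∨ M i 1 = 0 := by
    intro i
    by_contra hcon
    push_neg at hcon
    obtain ⟨h0, h1⟩ := hcon
    have k0 := key i 0
    have k1 := key i 1
    rw [mul_comm (E i i)] at k0 k1
    have e0 : D 0 0 = E i i := mul_left_cancel₀ h0 k0
    have e1 : D 1 1 = E i i := mul_left_cancel₀ h1 k1
    exact hne (e0.trans e1.symm)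
  rcases row 0 with h00 | h01 <;> rcases row 1 with h10 | h11
  · exfalso; apply hdet; rw [h00, h10]; ring
  · -- antidiagonal: M00 = 0, M11 = 0
    have h01 : M 0 1 ≠ 0 := fun hz => hdet (by rw [h00, hz]; ring)
    have h10 : M 1 0 ≠ 0 := fun hz => hdet (by rw [h00, hz]; ring)
    constructor
    · intro i; fin_cases i
      · exact ⟨1, h01, fun j hj => by fin_cases j <;> simp_all⟩
      · exact ⟨0, h10, fun j hj => by fin_cases j <;> simp_all⟩
    · intro j; fin_cases j
      · exact ⟨1, h10, fun i hi => by fin_cases i <;> simp_all⟩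
      · exact ⟨0, h01, fun i hi => by fin_cases i <;> simp_all⟩
  · -- diagonal
    have h00 : M 0 0 ≠ 0 := fun hz => hdet (by rw [h01, hz]; ring)
    have h11 : M 1 1 ≠ 0 := fun hz => hdet (by rw [h01, hz]; ring)
    constructor
    · intro i; fin_cases i
      · exact ⟨0, h00, fun j hj => by fin_cases j <;> simp_all⟩
      · exact ⟨1, h11, fun j hj => by fin_cases j <;> simp_all⟩
    · intro j; fin_cases j
      · exact ⟨0, h00, fun i hi => by fin_cases i <;> simp_all⟩
      · exact ⟨1, h11, fun i hi => by fin_cases i <;> simp_all⟩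
  · exfalso; apply hdet; rw [h01, h11]; ring

-- if W commutes with X and Y and adjoin {X,Y} = ⊤, then W commutes with everything
lemma aux_commall {k : Type*} [Field k] (X Y W : Matrix (Fin 2) (Fin 2) k)
    (hirr : Algebra.adjoin k ({X, Y} : Set (Matrix (Fin 2) (Fin 2) k)) = ⊤)
    (hWX : Commute W X) (hWY : Commute W Y) (A : Matrix (Fin 2) (Fin 2) k) :
    Commute W A := by
  have hA : A ∈ Algebra.adjoin k ({X, Y} : Set (Matrix (Fin 2) (Fin 2) k)) := by
    rw [hirr]; trivial
  induction hA using Algebra.adjoin_induction with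
  | mem s hs => rcases hs with rfl | hs; · exact hWX
                · rw [Set.mem_singleton_iff] at hs; subst hs; exact hWY
  | algebraMap r => exact Algebra.commute_algebraMap_right r W
  | add a b _ _ ha hb => exact ha.add_right hb
  | mul a b _ _ ha hb => exact ha.mul_right hb

-- a matrix commuting with everything is scalar (entries)
lemma aux_scalar {k : Type*} [Field k] (W : Matrix (Fin 2) (Fin 2) k)
    (hall : ∀ A, Commute W A) : W = W 0 0 • 1 := by
  have hE := (hall !![0,1;0,0]).eq
  have hF := (hall !![0,0;1,0]).eq
  have e01 := congrFun (congrFun hE 0) 1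
  have e11 := congrFun (congrFun hE 1) 1
  have f00 := congrFun (congrFun hF 0) 0
  rw [Matrix.mul_apply, Matrix.mul_apply, Fin.sum_univ_two] at e01 e11 f00
  simp at e01 e11 f00
  ext i j
  have htwo : ∀ i : Fin 2, i = 0 ∨ i = 1 := by decide
  rcases htwo i with rfl | rfl <;> rcases htwo j with rfl | rfl <;>
    simp [Matrix.one_apply, e01, e11, f00]

lemma aux_comm {k : Type*} [Field k] (X Y : Matrix (Fin 2) (Fin 2) k)
    (hirr : Algebra.adjoin k ({X, Y} : Set (Matrix (Fin 2) (Fin 2) k)) = ⊤)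
    (hc : Commute X Y) : False := by
  have hXs : X = X 0 0 • 1 := aux_scalar X (aux_commall X Y X hirr (Commute.refl X) hc)
  have hYs : Y = Y 0 0 • 1 := aux_scalar Y (aux_commall X Y Y hirr hc.symm (Commute.refl Y))
  have hFX : Commute (!![0,0;1,0] : Matrix (Fin 2) (Fin 2) k) X := by
    unfold Commute SemiconjBy; rw [hXs, mul_smul_comm, smul_mul_assoc, mul_one, one_mul]
  have hFY : Commute (!![0,0;1,0] : Matrix (Fin 2) (Fin 2) k) Y := by
    unfold Commute SemiconjBy; rw [hYs, mul_smul_comm, smul_mul_assoc, mul_one, one_mul]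
  have := (aux_commall X Y !![0,0;1,0] hirr hFX hFY !![0,1;0,0]).eq
  have h00 := congrFun (congrFun this 1) 1
  rw [Matrix.mul_apply, Matrix.mul_apply, Fin.sum_univ_two] at h00
  simp at h00

-- Cayley-Hamilton for 2x2 by entry bash
lemma aux_CH {k : Type*} [Field k] (Y : Matrix (Fin 2) (Fin 2) k) :
    Y * Y = (Matrix.trace Y) • Y - (Matrix.det Y) • 1 := by
  have htwo : ∀ i : Fin 2, i = 0 ∨ i = 1 := by decide
  ext i j
  rcases htwo i with rfl | rfl <;> rcases htwo j with rfl | rfl <;>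
    simp [Matrix.mul_apply, Fin.sum_univ_two, Matrix.trace_fin_two, Matrix.det_fin_two,
      Matrix.one_apply] <;> ring

section Ident
variable {k : Type*} [Field k] (X Y : Matrix (Fin 2) (Fin 2) k)
  (hX2 : X ^ 2 = 1) (hY3 : Y ^ 3 = 1)

include hX2 hY3 in
lemma aux_prod : (X * Y * X * Y ^ 2) * (Y * X * Y ^ 2 * X) = 1 := by
  have hXX : X * X = 1 := by rw [← hX2, pow_two]
  have hYYY : Y * Y * Y = 1 := by rw [← hY3, pow_succ, pow_two]
  have hX' : ∀ M : Matrix (Fin 2) (Fin 2) k, X * (X * M) = M := fun M => by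
    rw [← mul_assoc, hXX, one_mul]
  have hY' : ∀ M : Matrix (Fin 2) (Fin 2) k, Y * (Y * (Y * M)) = M := fun M => by
    rw [← mul_assoc, ← mul_assoc, hYYY, one_mul]
  simp only [pow_two, mul_assoc, hX', hY', hXX, hYYY, mul_one, one_mul]

include hX2 hY3 in
lemma aux_Xrel : X * (X * Y * X * Y ^ 2) = (Y * X * Y ^ 2 * X) * X := by
  have hXX : X * X = 1 := by rw [← hX2, pow_two]
  have hX' : ∀ M : Matrix (Fin 2) (Fin 2) k, X * (X * M) = M := fun M => by
    rw [← mul_assoc, hXX, one_mul]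
  simp only [pow_two, mul_assoc, hX', hXX, mul_one, one_mul]

lemma aux_Yrel : Y * (X * Y ^ 2 * X * Y) = (Y * X * Y ^ 2 * X) * Y := by
  simp only [mul_assoc]
end Ident

-- inverse of diagonal is diagonal
lemma aux_diaginv {k : Type*} [Field k] (D E : Matrix (Fin 2) (Fin 2) k)
    (hD : D.IsDiag) (h : D * E = 1) : E.IsDiag := by
  have key : ∀ i j, D i i * E i j = (1 : Matrix (Fin 2) (Fin 2) k) i j := by
    intro i j
    have hh := congrFun (congrFun h i) j
    rw [Matrix.mul_apply, Fin.sum_univ_two] at hh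
    have htwo : ∀ i : Fin 2, i = 0 ∨ i = 1 := by decide
    have d01 : D 0 1 = 0 := hD (by decide)
    have d10 : D 1 0 = 0 := hD (by decide)
    rcases htwo i with rfl | rfl <;>
      simp only [d01, d10, zero_mul, add_zero, zero_add] at hh <;> exact hh
  intro i j hij
  have hDii : D i i ≠ 0 := by
    intro hz
    have := key i i
    rw [hz, zero_mul, Matrix.one_apply_eq] at this
    exact one_ne_zero this.symm
  have := key i j
  rw [Matrix.one_apply_ne hij] at this
  exact (mul_eq_zero.mp this).resolve_left hDii

lemma aux_Lam_ne {k : Type*} [Field k] (X Y : Matrix (Fin 2) (Fin 2) k)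
    (hY : IsUnit Y) (hX2 : X ^ 2 = 1) (hY3 : Y ^ 3 = 1)
    (hΛ : (X * Y * X * Y ^ 2).IsDiag)
    (hirr : Algebra.adjoin k ({X, Y} : Set (Matrix (Fin 2) (Fin 2) k)) = ⊤) :
    (X * Y * X * Y ^ 2) 0 0 ≠ (X * Y * X * Y ^ 2) 1 1 := by
  intro heq
  have htwo : ∀ i : Fin 2, i = 0 ∨ i = 1 := by decide
  set c := (X * Y * X * Y ^ 2) 0 0 with hcdef
  have hXX : X * X = 1 := by rw [← hX2, pow_two]
  have hsc : X * Y * X * Y ^ 2 = c • (1 : Matrix (Fin 2) (Fin 2) k) := by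
    ext i j
    rcases htwo i with rfl | rfl <;> rcases htwo j with rfl | rfl
    · simp [Matrix.one_apply]; exact hcdef.symm
    · simp [Matrix.one_apply, hΛ (show (0:Fin 2) ≠ 1 by decide)]
    · simp [Matrix.one_apply, hΛ (show (1:Fin 2) ≠ 0 by decide)]
    · simp [Matrix.one_apply, ← heq]
  have hY3' : Y ^ 2 * Y = 1 := by rw [← pow_succ, hY3]
  have h1 : X * Y * X = c • Y := by
    calc X * Y * X = X * Y * X * (Y ^ 2 * Y) := by rw [hY3', mul_one]
      _ = (X * Y * X * Y ^ 2) * Y := by rw [← mul_assoc]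
      _ = (c • 1) * Y := by rw [hsc]
      _ = c • Y := by rw [smul_mul_assoc, one_mul]
  have hdet := congrArg Matrix.det h1
  rw [Matrix.det_mul, Matrix.det_mul, Matrix.det_smul] at hdet
  simp only [Fintype.card_fin] at hdet
  have hdX : Matrix.det X ^ 2 = 1 := by
    have := congrArg Matrix.det hX2
    rwa [Matrix.det_pow, Matrix.det_one] at this
  have hdY : Matrix.det Y ≠ 0 := ((Matrix.isUnit_iff_isUnit_det Y).mp hY).ne_zero
  have hc2 : c ^ 2 = 1 := by
    have hz : (c ^ 2 - Matrix.det X ^ 2) * Matrix.det Y = 0 := by linear_combination -hdet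
    rcases mul_eq_zero.mp hz with hh | hh
    · linear_combination hh + hdX
    · exact absurd hh hdY
  have hone : c = 1 → False := by
    intro h1c
    rw [h1c, one_smul] at h1
    have hcomm : X * Y = Y * X := by
      have h2 := congrArg (· * X) h1
      rw [mul_assoc, hXX, mul_one] at h2
      exact h2
    exact aux_comm X Y hirr hcomm
  have hcase : c = 1 ∨ c = -1 := by
    have hz : (c - 1) * (c + 1) = 0 := by linear_combination hc2
    rcases mul_eq_zero.mp hz with hh | hh
    · left; linear_combination hh
    · right; linear_combination hh
  rcases hcase with h | h
  · exact hone h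
  · rw [h, neg_smul, one_smul] at h1
    have htr : Matrix.trace (X * Y * X) = -Matrix.trace Y := by
      rw [h1, Matrix.trace_neg]
    have htr2 : Matrix.trace (X * Y * X) = Matrix.trace Y := by
      calc Matrix.trace (X * Y * X) = Matrix.trace (X * (Y * X)) := by rw [mul_assoc]
        _ = Matrix.trace ((Y * X) * X) := Matrix.trace_mul_comm _ _
        _ = Matrix.trace (Y * (X * X)) := by rw [mul_assoc]
        _ = Matrix.trace Y := by rw [hXX, mul_one]
    have hsum : Matrix.trace Y + Matrix.trace Y = 0 := by
      rw [htr2] at htr; linear_combination htr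
    by_cases h2 : (2 : k) = 0
    · exact hone (by linear_combination h - h2)
    · have htrY : Matrix.trace Y = 0 := by
        rcases mul_eq_zero.mp (show (2 : k) * Matrix.trace Y = 0 by linear_combination hsum)
          with hh | hh
        · exact absurd hh h2
        · exact hh
      have hCH := aux_CH Y
      rw [htrY, zero_smul, zero_sub] at hCH
      have hYYY : Y * Y * Y = 1 := by rw [← pow_two, ← pow_succ, hY3]
      have hY4 : Y * Y * (Y * Y) = Y := by rw [← mul_assoc, hYYY, one_mul]
      rw [hCH, neg_mul_neg, smul_mul_assoc, one_mul, smul_smul] at hY4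
      have hcomm : X * Y = Y * X := by
        rw [← hY4, mul_smul_comm, smul_mul_assoc, mul_one, one_mul]
      exact aux_comm X Y hirr hcomm

lemma aux_Gam_ne {k : Type*} [Field k] (X Y : Matrix (Fin 2) (Fin 2) k)
    (hY : IsUnit Y) (hX2 : X ^ 2 = 1) (hY3 : Y ^ 3 = 1)
    (hΓ : (X * Y ^ 2 * X * Y).IsDiag)
    (hirr : Algebra.adjoin k ({X, Y} : Set (Matrix (Fin 2) (Fin 2) k)) = ⊤) :
    (X * Y ^ 2 * X * Y) 0 0 ≠ (X * Y ^ 2 * X * Y) 1 1 := by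
  intro heq
  have htwo : ∀ i : Fin 2, i = 0 ∨ i = 1 := by decide
  set c := (X * Y ^ 2 * X * Y) 0 0 with hcdef
  have hXX : X * X = 1 := by rw [← hX2, pow_two]
  have hsc : X * Y ^ 2 * X * Y = c • (1 : Matrix (Fin 2) (Fin 2) k) := by
    ext i j
    rcases htwo i with rfl | rfl <;> rcases htwo j with rfl | rfl
    · simp [Matrix.one_apply]; exact hcdef.symm
    · simp [Matrix.one_apply, hΓ (show (0:Fin 2) ≠ 1 by decide)]
    · simp [Matrix.one_apply, hΓ (show (1:Fin 2) ≠ 0 by decide)]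
    · simp [Matrix.one_apply, ← heq]
  have hYY2 : Y * Y ^ 2 = 1 := by rw [← pow_succ', hY3]
  have h4 : Y ^ 2 * Y ^ 2 = Y := by
    rw [← pow_add, show (2 + 2 : ℕ) = 3 + 1 from rfl, pow_succ, hY3, one_mul]
  have h1 : X * Y ^ 2 * X = c • Y ^ 2 := by
    calc X * Y ^ 2 * X = X * Y ^ 2 * X * (Y * Y ^ 2) := by rw [hYY2, mul_one]
      _ = (X * Y ^ 2 * X * Y) * Y ^ 2 := by rw [← mul_assoc]
      _ = (c • 1) * Y ^ 2 := by rw [hsc]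
      _ = c • Y ^ 2 := by rw [smul_mul_assoc, one_mul]
  have hdet := congrArg Matrix.det h1
  rw [Matrix.det_mul, Matrix.det_mul, Matrix.det_smul] at hdet
  simp only [Fintype.card_fin] at hdet
  have hdX : Matrix.det X ^ 2 = 1 := by
    have := congrArg Matrix.det hX2
    rwa [Matrix.det_pow, Matrix.det_one] at this
  have hdY : Matrix.det Y ≠ 0 := ((Matrix.isUnit_iff_isUnit_det Y).mp hY).ne_zero
  have hdY2 : Matrix.det (Y ^ 2) ≠ 0 := by
    rw [Matrix.det_pow]; exact pow_ne_zero _ hdY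
  have hc2 : c ^ 2 = 1 := by
    have hz : (c ^ 2 - Matrix.det X ^ 2) * Matrix.det (Y ^ 2) = 0 := by linear_combination -hdet
    rcases mul_eq_zero.mp hz with hh | hh
    · linear_combination hh + hdX
    · exact absurd hh hdY2
  have hone : c = 1 → False := by
    intro h1c
    rw [h1c, one_smul] at h1
    have hswap : X * Y ^ 2 = Y ^ 2 * X := by
      have h2 := congrArg (· * X) h1
      rw [mul_assoc, hXX, mul_one] at h2
      exact h2
    have hcomm : X * Y = Y * X := by
      calc X * Y = X * (Y ^ 2 * Y ^ 2) := by rw [h4]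
        _ = (X * Y ^ 2) * Y ^ 2 := by rw [← mul_assoc]
        _ = (Y ^ 2 * X) * Y ^ 2 := by rw [hswap]
        _ = Y ^ 2 * (X * Y ^ 2) := by rw [mul_assoc]
        _ = Y ^ 2 * (Y ^ 2 * X) := by rw [hswap]
        _ = (Y ^ 2 * Y ^ 2) * X := by rw [← mul_assoc]
        _ = Y * X := by rw [h4]
    exact aux_comm X Y hirr hcomm
  have hcase : c = 1 ∨ c = -1 := by
    have hz : (c - 1) * (c + 1) = 0 := by linear_combination hc2
    rcases mul_eq_zero.mp hz with hh | hh
    · left; linear_combination hh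
    · right; linear_combination hh
  rcases hcase with h | h
  · exact hone h
  · rw [h, neg_smul, one_smul] at h1
    have htr : Matrix.trace (X * Y ^ 2 * X) = -Matrix.trace (Y ^ 2) := by
      rw [h1, Matrix.trace_neg]
    have htr2 : Matrix.trace (X * Y ^ 2 * X) = Matrix.trace (Y ^ 2) := by
      calc Matrix.trace (X * Y ^ 2 * X) = Matrix.trace (X * (Y ^ 2 * X)) := by rw [mul_assoc]
        _ = Matrix.trace ((Y ^ 2 * X) * X) := Matrix.trace_mul_comm _ _
        _ = Matrix.trace (Y ^ 2 * (X * X)) := by rw [mul_assoc]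
        _ = Matrix.trace (Y ^ 2) := by rw [hXX, mul_one]
    have hsum : Matrix.trace (Y ^ 2) + Matrix.trace (Y ^ 2) = 0 := by
      rw [htr2] at htr; linear_combination htr
    by_cases h2 : (2 : k) = 0
    · exact hone (by linear_combination h - h2)
    · have htrY : Matrix.trace (Y ^ 2) = 0 := by
        rcases mul_eq_zero.mp (show (2 : k) * Matrix.trace (Y ^ 2) = 0 by linear_combination hsum)
          with hh | hh
        · exact absurd hh h2
        · exact hh
      have hCH := aux_CH (Y ^ 2)
      rw [htrY, zero_smul, zero_sub] at hCH
      have hYs : Y = -(Matrix.det (Y ^ 2) • 1) := by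
        conv_lhs => rw [← h4]
        exact hCH
      have hcomm : X * Y = Y * X := by
        rw [hYs, mul_neg, neg_mul, mul_smul_comm, smul_mul_assoc, mul_one, one_mul]
      exact aux_comm X Y hirr hcomm

theorem stmt_8 {k : Type*} [Field k] [IsAlgClosed k]
    (X Y : Matrix (Fin 2) (Fin 2) k) (hX : IsUnit X) (hY : IsUnit Y)
    (hX2 : X ^ 2 = 1) (hY3 : Y ^ 3 = 1)
    (hΛ : (X * Y * X * Y ^ 2).IsDiag) (hΓ : (X * Y ^ 2 * X * Y).IsDiag)
    (hirr : Algebra.adjoin k ({X, Y} : Set (Matrix (Fin 2) (Fin 2) k)) = ⊤) :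
    (∀ i, ∃! j, X i j ≠ 0) ∧ (∀ j, ∃! i, X i j ≠ 0) ∧
    (∀ i, ∃! j, Y i j ≠ 0) ∧ (∀ j, ∃! i, Y i j ≠ 0) := by
  have hE : (Y * X * Y ^ 2 * X).IsDiag :=
    aux_diaginv _ _ hΛ (aux_prod X Y hX2 hY3)
  have hXpart := aux_monomial X (X * Y * X * Y ^ 2) (Y * X * Y ^ 2 * X) hX hΛ hE
    (aux_Lam_ne X Y hY hX2 hY3 hΛ hirr) (aux_Xrel X Y hX2 hY3)
  have hYpart := aux_monomial Y (X * Y ^ 2 * X * Y) (Y * X * Y ^ 2 * X) hY hΓ hE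
    (aux_Gam_ne X Y hY hX2 hY3 hΓ hirr) (aux_Yrel X Y)
  exact ⟨hXpart.1, hXpart.2, hYpart.1, hYpart.2⟩
end

section
/- There are no 2-dimensional irreducible representations of PSL₂(ℤ) = ⟨x, y | x² = y³ = 1⟩ over an algebraically closed field of characteristic 3 whose images of xyxy² and xy²xy are diagonal matrices. -/
open Matrix

lemma diag_sandwich {k : Type*} [Field k] (A Y B : Matrix (Fin 2) (Fin 2) k)
    (hA : A.IsDiag) (hB : B.IsDiag) (i j : Fin 2) :
    (A * Y * B) i j = A i i * Y i j * B j j := by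
  have hA01 : A 0 1 = 0 := hA (by decide)
  have hA10 : A 1 0 = 0 := hA (by decide)
  have hB01 : B 0 1 = 0 := hB (by decide)
  have hB10 : B 1 0 = 0 := hB (by decide)
  fin_cases i <;> fin_cases j <;>
    simp [Matrix.mul_apply, Fin.sum_univ_two, hA01, hA10, hB01, hB10]

lemma comm_not_top {k : Type*} [Field k] (X Y : Matrix (Fin 2) (Fin 2) k)
    (h : X * Y = Y * X) :
    Algebra.adjoin k ({X, Y} : Set (Matrix (Fin 2) (Fin 2) k)) ≠ ⊤ := by
  intro htop
  set s : Set (Matrix (Fin 2) (Fin 2) k) := {X, Y} with hs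
  have hcomm : ∀ a ∈ s, ∀ b ∈ s, a * b = b * a := by
    rintro a (rfl | rfl) b (rfl | rfl) <;> simp [h]
  have hle := Algebra.adjoin_le_centralizer_centralizer k s
  have hmem : ∀ M : Matrix (Fin 2) (Fin 2) k,
      M ∈ Subalgebra.centralizer k (Subalgebra.centralizer k s : Set (Matrix (Fin 2) (Fin 2) k)) := by
    intro M
    apply hle
    rw [htop]
    trivial
  have key := Set.centralizer_centralizer_comm_of_comm hcomm
    (Matrix.single 0 1 (1:k)) (hmem _) (Matrix.single 1 0 (1:k)) (hmem _)
  have := congrFun (congrFun key 0) 0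
  simp [Matrix.mul_apply, Fin.sum_univ_two, Matrix.single] at this

theorem stmt_11 {k : Type*} [Field k] [IsAlgClosed k] [CharP k 3] :
    ¬ ∃ X Y : Matrix (Fin 2) (Fin 2) k,
      IsUnit X ∧ IsUnit Y ∧ X ^ 2 = 1 ∧ Y ^ 3 = 1 ∧
      (X * Y * X * Y ^ 2).IsDiag ∧ (X * Y ^ 2 * X * Y).IsDiag ∧
      Algebra.adjoin k ({X, Y} : Set (Matrix (Fin 2) (Fin 2) k)) = ⊤ := by
  rintro ⟨X, Y, hXu, hYu, hX2, hY3, hA, hB, htop⟩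
  have h3k : (3 : k) = 0 := CharP.cast_eq_zero k 3
  have hXX : X * X = 1 := by rw [← sq]; exact hX2
  have hYYY : Y * Y * Y = 1 := by
    have : Y ^ 3 = Y * Y * Y := by rw [pow_succ, pow_two]
    rw [← this]; exact hY3
  -- cube root of 1 in char 3 is 1
  have cube1 : ∀ t : k, t ^ 3 = 1 → t = 1 := by
    intro t ht
    have h : (t - 1) ^ 3 = 0 := by linear_combination ht + (t - t^2) * h3k
    have := pow_eq_zero_iff (n := 3) (by norm_num) |>.mp h
    exact sub_eq_zero.mp this
  have cube1' : ∀ t : k, t * t * t = 1 → t = 1 := by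
    intro t ht
    exact cube1 t (by rw [pow_succ, pow_two]; exact ht)
  have hXc : ∀ Z : Matrix (Fin 2) (Fin 2) k, X * (X * Z) = Z := by
    intro Z; rw [← mul_assoc, hXX, one_mul]
  have hYc : ∀ Z : Matrix (Fin 2) (Fin 2) k, Y * (Y * (Y * Z)) = Z := by
    intro Z; rw [← mul_assoc, ← mul_assoc, hYYY, one_mul]
  have hY' : Y * (Y * Y) = 1 := by rw [← mul_assoc]; exact hYYY
  -- key identity : Y = A * Y * B
  have hKey : Y = (X * Y * X * Y ^ 2) * Y * (X * Y ^ 2 * X * Y) := by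
    symm
    simp only [pow_two, mul_assoc]
    simp only [hXc, hYc]
  -- scalar case : if B is scalar then X and Y commute
  have scalar : ∀ g : k, X * Y ^ 2 * X * Y = g • (1 : Matrix (Fin 2) (Fin 2) k) →
      X * Y = Y * X := by
    intro g hg
    have h1 : X * (Y * (Y * X)) = g • (Y * Y) := by
      have h := congrArg (fun M => M * (Y * Y)) hg
      simp only [smul_mul_assoc, one_mul, pow_two, mul_assoc] at h
      rw [hY', mul_one] at h
      exact h
    have h2 : X * (Y * X) = (g * g) • Y := by
      have h := congrArg (fun M => M * M) h1
      simp only [smul_mul_assoc, mul_smul_comm, smul_smul, mul_assoc] at h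
      simp only [hXc, hYc] at h
      exact h
    have h3 : (1 : Matrix (Fin 2) (Fin 2) k) = (g * (g * (g * (g * (g * g))))) • (1 : Matrix (Fin 2) (Fin 2) k) := by
      have h := congrArg (fun M => M * (M * M)) h2
      simp only [smul_mul_assoc, mul_smul_comm, smul_smul, mul_assoc] at h
      simp only [hXc, hYc] at h
      rw [hXX, hY'] at h
      exact h
    have h4 : (g * g) ^ 3 = 1 := by
      have h := congrFun (congrFun h3 0) 0
      simp [Matrix.one_apply] at h
      linear_combination -h
    have h5 : g * g = 1 := cube1 _ h4
    rw [h5, one_smul] at h2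
    have := congrArg (fun M => M * X) h2
    simp only [mul_assoc, hXX, mul_one] at this
    exact this
  -- diagonal entries of A and B
  have hA01 : (X * Y * X * Y ^ 2) 0 1 = 0 := hA (by decide)
  have hA10 : (X * Y * X * Y ^ 2) 1 0 = 0 := hA (by decide)
  have hB01 : (X * Y ^ 2 * X * Y) 0 1 = 0 := hB (by decide)
  have hB10 : (X * Y ^ 2 * X * Y) 1 0 = 0 := hB (by decide)
  set a := (X * Y * X * Y ^ 2) 0 0 with ha
  set b := (X * Y * X * Y ^ 2) 1 1 with hb
  set c := (X * Y ^ 2 * X * Y) 0 0 with hc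
  set d := (X * Y ^ 2 * X * Y) 1 1 with hd
  -- entrywise equations
  have E : ∀ i j : Fin 2, Y i j = (X * Y * X * Y ^ 2) i i * Y i j * (X * Y ^ 2 * X * Y) j j := by
    intro i j
    exact (congrFun (congrFun hKey i) j).trans (diag_sandwich _ _ _ hA hB i j)
  have E00 := E 0 0
  have E01 := E 0 1
  have E10 := E 1 0
  have E11 := E 1 1
  simp only [← ha, ← hb, ← hc, ← hd] at E00 E01 E10 E11
  -- if c = d then B is scalar, X and Y commute, contradiction
  have scalarCD : c = d → False := by
    intro hcd
    have hBs : X * Y ^ 2 * X * Y = c • (1 : Matrix (Fin 2) (Fin 2) k) := by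
      ext i j
      fin_cases i <;> fin_cases j <;>
        simp [Matrix.one_apply, hB01, hB10, ← hc, ← hd, hcd]
    exact comm_not_top X Y (scalar c hBs) htop
  -- determinant of Y is nonzero
  have hdet : Y 0 0 * Y 1 1 - Y 0 1 * Y 1 0 ≠ 0 := by
    rw [Matrix.isUnit_iff_isUnit_det, Matrix.det_fin_two, isUnit_iff_ne_zero] at hYu
    exact hYu
  by_cases h01 : Y 0 1 = 0
  · by_cases h10 : Y 1 0 = 0
    · -- Y diagonal, hence Y = 1, X and Y commute
      have h00 : Y 0 0 * (Y 0 0 * Y 0 0) = 1 := by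
        have := congrFun (congrFun hYYY 0) 0
        simpa [Matrix.mul_apply, Fin.sum_univ_two, h01, h10, Matrix.one_apply, mul_assoc] using this
      have h11 : Y 1 1 * (Y 1 1 * Y 1 1) = 1 := by
        have := congrFun (congrFun hYYY 1) 1
        simpa [Matrix.mul_apply, Fin.sum_univ_two, h01, h10, Matrix.one_apply, mul_assoc] using this
      have hy00 : Y 0 0 = 1 := cube1' _ (by rw [← mul_assoc] at h00; exact h00)
      have hy11 : Y 1 1 = 1 := cube1' _ (by rw [← mul_assoc] at h11; exact h11)
      have hY1 : Y = 1 := by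
        ext i j; fin_cases i <;> fin_cases j <;> simp [h01, h10, hy00, hy11, Matrix.one_apply]
      exact comm_not_top X Y (by rw [hY1, mul_one, one_mul]) htop
    · -- Y 0 1 = 0, Y 1 0 ≠ 0
      have h11 : Y 1 1 ≠ 0 := by
        intro h; apply hdet; rw [h01, h]; ring
      have hbc : b * c = 1 := by
        have h : (b * c) * Y 1 0 = 1 * Y 1 0 := by linear_combination -E10
        exact mul_right_cancel₀ h10 h
      have hbd : b * d = 1 := by
        have h : (b * d) * Y 1 1 = 1 * Y 1 1 := by linear_combination -E11
        exact mul_right_cancel₀ h11 h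
      exact scalarCD (by calc c = (b * d) * c := by rw [hbd]; ring
                           _ = (b * c) * d := by ring
                           _ = d := by rw [hbc]; ring)
  · by_cases h00 : Y 0 0 = 0
    · have h10 : Y 1 0 ≠ 0 := by
        intro h; apply hdet; rw [h00, h]; ring
      by_cases h11 : Y 1 1 = 0
      · -- antidiagonal : contradiction with Y^3 = 1
        have := congrFun (congrFun hYYY 0) 1
        simp [Matrix.mul_apply, Fin.sum_univ_two, h00, h11, Matrix.one_apply] at this
        rcases this with h | h
        · rcases h with h | h
          · exact h01 h
          · exact h10 h
        · exact h01 h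
      · have hbc : b * c = 1 := by
          have h : (b * c) * Y 1 0 = 1 * Y 1 0 := by linear_combination -E10
          exact mul_right_cancel₀ h10 h
        have hbd : b * d = 1 := by
          have h : (b * d) * Y 1 1 = 1 * Y 1 1 := by linear_combination -E11
          exact mul_right_cancel₀ h11 h
        exact scalarCD (by calc c = (b * d) * c := by rw [hbd]; ring
                             _ = (b * c) * d := by ring
                             _ = d := by rw [hbc]; ring)
    · -- Y 0 0 ≠ 0, Y 0 1 ≠ 0
      have hac : a * c = 1 := by
        have h : (a * c) * Y 0 0 = 1 * Y 0 0 := by linear_combination -E00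
        exact mul_right_cancel₀ h00 h
      have had : a * d = 1 := by
        have h : (a * d) * Y 0 1 = 1 * Y 0 1 := by linear_combination -E01
        exact mul_right_cancel₀ h01 h
      exact scalarCD (by calc c = (a * d) * c := by rw [had]; ring
                           _ = (a * c) * d := by ring
                           _ = d := by rw [hac]; ring)
end

section
/- Let k have characteristic ≠ 2, X = diag(-1,1,1), and Y the cyclic permutation matrix sending e₁→e₃, e₂→e₁, e₃→e₂ (i.e., Y has 1's in positions (1,2), (2,3), (3,1)). Then X² = Y³ = I, XYXY² and XY²XY are diagonal, and (X,Y) generates M_3(k) as a k-algebra. -/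
open Matrix

set_option maxHeartbeats 4000000 in
theorem stmt_12 {k : Type*} [Field k] (hchar : (2 : k) ≠ 0) :
    let X : Matrix (Fin 3) (Fin 3) k := !![-1, 0, 0; 0, 1, 0; 0, 0, 1]
    let Y : Matrix (Fin 3) (Fin 3) k := !![0, 1, 0; 0, 0, 1; 1, 0, 0]
    X ^ 2 = 1 ∧ Y ^ 3 = 1 ∧
    (X * Y * X * Y ^ 2).IsDiag ∧ (X * Y ^ 2 * X * Y).IsDiag ∧
    Algebra.adjoin k ({X, Y} : Set (Matrix (Fin 3) (Fin 3) k)) = ⊤ := by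
  intro X Y
  have hX2 : X ^ 2 = 1 := by
    show !![-1, 0, 0; 0, 1, 0; 0, 0, 1] ^ 2 = (1 : Matrix (Fin 3) (Fin 3) k)
    rw [pow_two, Matrix.mul_fin_three, Matrix.one_fin_three]
    norm_num
  have hY3 : Y ^ 3 = 1 := by
    show !![0, 1, 0; 0, 0, 1; 1, 0, 0] ^ 3 = (1 : Matrix (Fin 3) (Fin 3) k)
    rw [pow_succ, pow_two, Matrix.mul_fin_three, Matrix.mul_fin_three, Matrix.one_fin_three]
    norm_num
  refine ⟨hX2, hY3, ?_, ?_, ?_⟩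
  · have hD : X * Y * X * Y ^ 2 = !![-1, 0, 0; 0, 1, 0; 0, 0, -1] := by
      show !![-1, 0, 0; 0, 1, 0; 0, 0, 1] * !![0, 1, 0; 0, 0, 1; 1, 0, 0] *
        !![-1, 0, 0; 0, 1, 0; 0, 0, 1] * !![0, 1, 0; 0, 0, 1; 1, 0, 0] ^ 2 = _
      rw [pow_two, Matrix.mul_fin_three, Matrix.mul_fin_three, Matrix.mul_fin_three,
        Matrix.mul_fin_three]
      norm_num
    rw [hD]
    intro r c hrc
    fin_cases r <;> fin_cases c <;>
      simp_all [Matrix.vecHead, Matrix.vecTail]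
  · have hD : X * Y ^ 2 * X * Y = !![-1, 0, 0; 0, -1, 0; 0, 0, 1] := by
      show !![-1, 0, 0; 0, 1, 0; 0, 0, 1] * !![0, 1, 0; 0, 0, 1; 1, 0, 0] ^ 2 *
        !![-1, 0, 0; 0, 1, 0; 0, 0, 1] * !![0, 1, 0; 0, 0, 1; 1, 0, 0] = _
      rw [pow_two, Matrix.mul_fin_three, Matrix.mul_fin_three, Matrix.mul_fin_three,
        Matrix.mul_fin_three]
      norm_num
    rw [hD]
    intro r c hrc
    fin_cases r <;> fin_cases c <;>
      simp_all [Matrix.vecHead, Matrix.vecTail]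
  · set S := Algebra.adjoin k ({X, Y} : Set (Matrix (Fin 3) (Fin 3) k)) with hS
    have hX : X ∈ S := Algebra.subset_adjoin (by simp)
    have hY : Y ∈ S := Algebra.subset_adjoin (by simp)
    have h21 : (2 : k)⁻¹ * 2 = 1 := inv_mul_cancel₀ hchar
    have h1 : (1 : Matrix (Fin 3) (Fin 3) k) - X = !![2, 0, 0; 0, 0, 0; 0, 0, 0] := by
      show (1 : Matrix (Fin 3) (Fin 3) k) - !![-1, 0, 0; 0, 1, 0; 0, 0, 1] = _
      rw [Matrix.one_fin_three]
      ext r c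
      fin_cases r <;> fin_cases c <;>
        norm_num [Matrix.vecHead, Matrix.vecTail, one_add_one_eq_two]
    have base : ∀ a b : ℕ,
        (2 : k)⁻¹ • ((!![0, 1, 0; 0, 0, 1; 1, 0, 0] : Matrix (Fin 3) (Fin 3) k) ^ a *
          !![2, 0, 0; 0, 0, 0; 0, 0, 0] * (!![0, 1, 0; 0, 0, 1; 1, 0, 0] : Matrix (Fin 3) (Fin 3) k) ^ b) ∈ S := by
      intro a b
      show (2 : k)⁻¹ • (Y ^ a * !![2, 0, 0; 0, 0, 0; 0, 0, 0] * Y ^ b) ∈ S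
      rw [← h1]
      exact S.smul_mem
        (mul_mem (mul_mem (pow_mem hY a) (sub_mem (one_mem S) hX)) (pow_mem hY b)) _
    have key : ∀ i j : Fin 3, (Matrix.single i j (1 : k)) ∈ S := by
      intro i j
      fin_cases i <;> fin_cases j
      · have e : (2 : k)⁻¹ • ((!![0, 1, 0; 0, 0, 1; 1, 0, 0] : Matrix (Fin 3) (Fin 3) k) ^ 0 *
            !![2, 0, 0; 0, 0, 0; 0, 0, 0] * (!![0, 1, 0; 0, 0, 1; 1, 0, 0] : Matrix (Fin 3) (Fin 3) k) ^ 0) =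
            Matrix.single (0 : Fin 3) (0 : Fin 3) (1 : k) := by
          simp only [pow_zero, pow_one, pow_two, one_mul, Matrix.mul_one, Matrix.mul_fin_three]
          ext r c
          fin_cases r <;> fin_cases c <;>
            simp [Matrix.single, h21, Matrix.smul_apply, Matrix.vecHead, Matrix.vecTail]
        have hb := base 0 0
        rw [e] at hb
        exact hb
      · have e : (2 : k)⁻¹ • ((!![0, 1, 0; 0, 0, 1; 1, 0, 0] : Matrix (Fin 3) (Fin 3) k) ^ 0 *
            !![2, 0, 0; 0, 0, 0; 0, 0, 0] * (!![0, 1, 0; 0, 0, 1; 1, 0, 0] : Matrix (Fin 3) (Fin 3) k) ^ 1) =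
            Matrix.single (0 : Fin 3) (1 : Fin 3) (1 : k) := by
          simp only [pow_zero, pow_one, pow_two, one_mul, Matrix.mul_one, Matrix.mul_fin_three]
          ext r c
          fin_cases r <;> fin_cases c <;>
            simp [Matrix.single, h21, Matrix.smul_apply, Matrix.vecHead, Matrix.vecTail]
        have hb := base 0 1
        rw [e] at hb
        exact hb
      · have e : (2 : k)⁻¹ • ((!![0, 1, 0; 0, 0, 1; 1, 0, 0] : Matrix (Fin 3) (Fin 3) k) ^ 0 *
            !![2, 0, 0; 0, 0, 0; 0, 0, 0] * (!![0, 1, 0; 0, 0, 1; 1, 0, 0] : Matrix (Fin 3) (Fin 3) k) ^ 2) =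
            Matrix.single (0 : Fin 3) (2 : Fin 3) (1 : k) := by
          simp only [pow_zero, pow_one, pow_two, one_mul, Matrix.mul_one, Matrix.mul_fin_three]
          ext r c
          fin_cases r <;> fin_cases c <;>
            simp [Matrix.single, h21, Matrix.smul_apply, Matrix.vecHead, Matrix.vecTail]
        have hb := base 0 2
        rw [e] at hb
        exact hb
      · have e : (2 : k)⁻¹ • ((!![0, 1, 0; 0, 0, 1; 1, 0, 0] : Matrix (Fin 3) (Fin 3) k) ^ 2 *
            !![2, 0, 0; 0, 0, 0; 0, 0, 0] * (!![0, 1, 0; 0, 0, 1; 1, 0, 0] : Matrix (Fin 3) (Fin 3) k) ^ 0) =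
            Matrix.single (1 : Fin 3) (0 : Fin 3) (1 : k) := by
          simp only [pow_zero, pow_one, pow_two, one_mul, Matrix.mul_one, Matrix.mul_fin_three]
          ext r c
          fin_cases r <;> fin_cases c <;>
            simp [Matrix.single, h21, Matrix.smul_apply, Matrix.vecHead, Matrix.vecTail]
        have hb := base 2 0
        rw [e] at hb
        exact hb
      · have e : (2 : k)⁻¹ • ((!![0, 1, 0; 0, 0, 1; 1, 0, 0] : Matrix (Fin 3) (Fin 3) k) ^ 2 *
            !![2, 0, 0; 0, 0, 0; 0, 0, 0] * (!![0, 1, 0; 0, 0, 1; 1, 0, 0] : Matrix (Fin 3) (Fin 3) k) ^ 1) =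
            Matrix.single (1 : Fin 3) (1 : Fin 3) (1 : k) := by
          simp only [pow_zero, pow_one, pow_two, one_mul, Matrix.mul_one, Matrix.mul_fin_three]
          ext r c
          fin_cases r <;> fin_cases c <;>
            simp [Matrix.single, h21, Matrix.smul_apply, Matrix.vecHead, Matrix.vecTail]
        have hb := base 2 1
        rw [e] at hb
        exact hb
      · have e : (2 : k)⁻¹ • ((!![0, 1, 0; 0, 0, 1; 1, 0, 0] : Matrix (Fin 3) (Fin 3) k) ^ 2 *
            !![2, 0, 0; 0, 0, 0; 0, 0, 0] * (!![0, 1, 0; 0, 0, 1; 1, 0, 0] : Matrix (Fin 3) (Fin 3) k) ^ 2) =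
            Matrix.single (1 : Fin 3) (2 : Fin 3) (1 : k) := by
          simp only [pow_zero, pow_one, pow_two, one_mul, Matrix.mul_one, Matrix.mul_fin_three]
          ext r c
          fin_cases r <;> fin_cases c <;>
            simp [Matrix.single, h21, Matrix.smul_apply, Matrix.vecHead, Matrix.vecTail]
        have hb := base 2 2
        rw [e] at hb
        exact hb
      · have e : (2 : k)⁻¹ • ((!![0, 1, 0; 0, 0, 1; 1, 0, 0] : Matrix (Fin 3) (Fin 3) k) ^ 1 *
            !![2, 0, 0; 0, 0, 0; 0, 0, 0] * (!![0, 1, 0; 0, 0, 1; 1, 0, 0] : Matrix (Fin 3) (Fin 3) k) ^ 0) =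
            Matrix.single (2 : Fin 3) (0 : Fin 3) (1 : k) := by
          simp only [pow_zero, pow_one, pow_two, one_mul, Matrix.mul_one, Matrix.mul_fin_three]
          ext r c
          fin_cases r <;> fin_cases c <;>
            simp [Matrix.single, h21, Matrix.smul_apply, Matrix.vecHead, Matrix.vecTail]
        have hb := base 1 0
        rw [e] at hb
        exact hb
      · have e : (2 : k)⁻¹ • ((!![0, 1, 0; 0, 0, 1; 1, 0, 0] : Matrix (Fin 3) (Fin 3) k) ^ 1 *
            !![2, 0, 0; 0, 0, 0; 0, 0, 0] * (!![0, 1, 0; 0, 0, 1; 1, 0, 0] : Matrix (Fin 3) (Fin 3) k) ^ 1) =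
            Matrix.single (2 : Fin 3) (1 : Fin 3) (1 : k) := by
          simp only [pow_zero, pow_one, pow_two, one_mul, Matrix.mul_one, Matrix.mul_fin_three]
          ext r c
          fin_cases r <;> fin_cases c <;>
            simp [Matrix.single, h21, Matrix.smul_apply, Matrix.vecHead, Matrix.vecTail]
        have hb := base 1 1
        rw [e] at hb
        exact hb
      · have e : (2 : k)⁻¹ • ((!![0, 1, 0; 0, 0, 1; 1, 0, 0] : Matrix (Fin 3) (Fin 3) k) ^ 1 *
            !![2, 0, 0; 0, 0, 0; 0, 0, 0] * (!![0, 1, 0; 0, 0, 1; 1, 0, 0] : Matrix (Fin 3) (Fin 3) k) ^ 2) =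
            Matrix.single (2 : Fin 3) (2 : Fin 3) (1 : k) := by
          simp only [pow_zero, pow_one, pow_two, one_mul, Matrix.mul_one, Matrix.mul_fin_three]
          ext r c
          fin_cases r <;> fin_cases c <;>
            simp [Matrix.single, h21, Matrix.smul_apply, Matrix.vecHead, Matrix.vecTail]
        have hb := base 1 2
        rw [e] at hb
        exact hb
    rw [eq_top_iff]
    intro M _
    rw [Matrix.matrix_eq_sum_single M]
    refine sum_mem fun i _ => sum_mem fun j _ => ?_
    have hM : Matrix.single i j (M i j) = (M i j) • Matrix.single i j (1 : k) := by
      rw [Matrix.smul_single, smul_eq_mul, mul_one]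
    rw [hM]
    exact S.smul_mem (key i j) _
end

section
/- There is no pair X, Y ∈ GL_3(k), k algebraically closed of characteristic 2, with X² = Y³ = I, both XYXY² and XY²XY diagonal, and (X,Y) generating M_3(k) as a k-algebra. -/
open Matrix

section Aux

variable {k : Type*} [Field k]

/-- entry of diagonal * M -/
private lemma diag_mul_apply {A M : Matrix (Fin 3) (Fin 3) k} (hA : A.IsDiag)
    (i j : Fin 3) : (A * M) i j = A i i * M i j := by
  rw [Matrix.mul_apply]
  apply Finset.sum_eq_single_of_mem i (Finset.mem_univ i)
  intro b _ hb
  rw [hA (Ne.symm hb), zero_mul]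

/-- entry of M * diagonal -/
private lemma mul_diag_apply {A M : Matrix (Fin 3) (Fin 3) k} (hA : A.IsDiag)
    (i j : Fin 3) : (M * A) i j = M i j * A j j := by
  rw [Matrix.mul_apply]
  apply Finset.sum_eq_single_of_mem j (Finset.mem_univ j)
  intro b _ hb
  rw [hA hb, mul_zero]

private lemma fin3_invol : ∀ σ : Fin 3 → Fin 3, (∀ j, σ (σ j) = j) → ∃ i, σ i = i := by
  decide

private lemma fin3_cube : ∀ τ : Fin 3 → Fin 3, (∀ j, τ (τ (τ j)) = j) →
    ∀ i₀, τ i₀ = i₀ → ∀ j, τ j = j := by decide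

private lemma fin3_cases : ∀ a b c i : Fin 3, a ≠ b → a ≠ c → b ≠ c →
    (i = a ∨ i = b ∨ i = c) := by decide

/-- the subalgebra of matrices whose column i₀ is supported at i₀ -/
private def colSub (i₀ : Fin 3) : Subalgebra k (Matrix (Fin 3) (Fin 3) k) where
  carrier := {M | ∀ j, j ≠ i₀ → M j i₀ = 0}
  add_mem' := by
    intro a b ha hb j hj
    simp [Matrix.add_apply, ha j hj, hb j hj]
  zero_mem' := by intro j hj; simp
  mul_mem' := by
    intro a b ha hb j hj
    show (a * b) j i₀ = 0
    rw [Matrix.mul_apply]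
    apply Finset.sum_eq_zero
    intro x _
    by_cases hx : x = i₀
    · subst hx; rw [ha j hj, zero_mul]
    · rw [hb x hx, mul_zero]
  one_mem' := by intro j hj; exact Matrix.one_apply_ne hj
  algebraMap_mem' := by
    intro r j hj
    simp [Matrix.algebraMap_matrix_apply, hj]

private lemma final_contra {X Y : Matrix (Fin 3) (Fin 3) k} (i₀ : Fin 3)
    (hX : ∀ j, j ≠ i₀ → X j i₀ = 0) (hY : ∀ j, j ≠ i₀ → Y j i₀ = 0)
    (hadj : Algebra.adjoin k ({X, Y} : Set (Matrix (Fin 3) (Fin 3) k)) = ⊤) : False := by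
  have hle : Algebra.adjoin k ({X, Y} : Set (Matrix (Fin 3) (Fin 3) k)) ≤ colSub i₀ := by
    apply Algebra.adjoin_le
    rintro z hz
    rcases Set.mem_insert_iff.mp hz with rfl | hz
    · exact hX
    · rw [Set.mem_singleton_iff] at hz; subst hz; exact hY
  rw [hadj] at hle
  obtain ⟨j₀, hj₀⟩ := exists_ne i₀
  have hmem : (Matrix.single j₀ i₀ (1 : k)) ∈ colSub i₀ := hle trivial
  have := hmem j₀ hj₀
  rw [Matrix.single_apply_same] at this
  exact one_ne_zero this

end Aux

set_option maxHeartbeats 1000000 in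
theorem stmt_13 {k : Type*} [Field k] [IsAlgClosed k] [CharP k 2] :
    ¬ ∃ X Y : Matrix (Fin 3) (Fin 3) k,
      IsUnit X ∧ IsUnit Y ∧ X ^ 2 = 1 ∧ Y ^ 3 = 1 ∧
      (X * Y * X * Y ^ 2).IsDiag ∧ (X * Y ^ 2 * X * Y).IsDiag ∧
      Algebra.adjoin k ({X, Y} : Set (Matrix (Fin 3) (Fin 3) k)) = ⊤ := by
  rintro ⟨X, Y, hXu, hYu, hX2, hY3, hD, hE, hadj⟩
  have h2 : (2 : k) = 0 := by exact_mod_cast CharP.cast_eq_zero k 2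
  have sq1 : ∀ a : k, a * a = 1 → a = 1 := by
    intro a ha
    have h : (a - 1) * (a - 1) = 0 := by linear_combination ha + (1 - a) * h2
    have := mul_self_eq_zero.mp h
    exact sub_eq_zero.mp this
  have hXX : X * X = 1 := by rw [← pow_two]; exact hX2
  have hYYY : Y * (Y * Y) = 1 := by
    rw [← mul_assoc, ← pow_two, ← pow_succ]; exact hY3
  have hXc : ∀ M : Matrix (Fin 3) (Fin 3) k, X * (X * M) = M := by
    intro M; rw [← mul_assoc, hXX, one_mul]
  have hYc : ∀ M : Matrix (Fin 3) (Fin 3) k, Y * (Y * (Y * M)) = M := by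
    intro M; rw [← mul_assoc, ← mul_assoc, mul_assoc Y Y Y, hYYY, one_mul]
  set D := X * Y * X * Y ^ 2 with hDdef
  set E := X * Y ^ 2 * X * Y with hEdef
  have hY2 : Y ^ 2 = Y * Y := pow_two Y
  -- the four key relations
  have rel1 : D * X * D = X := by
    rw [hDdef, hY2]
    simp only [mul_assoc, hXc, hYc, hXX, hYYY, mul_one, one_mul]
  have rel2 : E * X * E = X := by
    rw [hEdef, hY2]
    simp only [mul_assoc, hXc, hYc, hXX, hYYY, mul_one, one_mul]
  have rel3 : D * Y * D = E * Y := by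
    rw [hDdef, hEdef, hY2]
    simp only [mul_assoc, hXc, hYc, hXX, hYYY, mul_one, one_mul]
  have rel4 : D * Y * E = Y := by
    rw [hDdef, hEdef, hY2]
    simp only [mul_assoc, hXc, hYc, hXX, hYYY, mul_one, one_mul]
  set d : Fin 3 → k := fun i => D i i with hd
  set e : Fin 3 → k := fun i => E i i with he
  -- nonvanishing of diagonal entries
  have hDu : IsUnit D := ((hXu.mul hYu).mul hXu).mul (hYu.pow 2)
  have hEu : IsUnit E := ((hXu.mul (hYu.pow 2)).mul hXu).mul hYu
  have hd0 : ∀ i, d i ≠ 0 := by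
    intro i
    obtain ⟨Z, hZ⟩ := hDu.exists_right_inv
    have h1 : (D * Z) i i = d i * Z i i := diag_mul_apply hD i i
    rw [hZ, Matrix.one_apply_eq] at h1
    exact left_ne_zero_of_mul_eq_one h1.symm
  have he0 : ∀ i, e i ≠ 0 := by
    intro i
    obtain ⟨Z, hZ⟩ := hEu.exists_right_inv
    have h1 : (E * Z) i i = e i * Z i i := diag_mul_apply hE i i
    rw [hZ, Matrix.one_apply_eq] at h1
    exact left_ne_zero_of_mul_eq_one h1.symm
  -- entrywise versions of the relations
  have F1 : ∀ i j, X i j ≠ 0 → d i * d j = 1 := by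
    intro i j hij
    have h1 : (D * X * D) i j = d i * X i j * d j := by
      rw [mul_diag_apply hD, diag_mul_apply hD]
    rw [rel1] at h1
    have h : (d i * d j - 1) * X i j = 0 := by linear_combination -h1
    rcases mul_eq_zero.mp h with h | h
    · exact sub_eq_zero.mp h
    · exact absurd h hij
  have F2 : ∀ i j, X i j ≠ 0 → e i * e j = 1 := by
    intro i j hij
    have h1 : (E * X * E) i j = e i * X i j * e j := by
      rw [mul_diag_apply hE, diag_mul_apply hE]
    rw [rel2] at h1
    have h : (e i * e j - 1) * X i j = 0 := by linear_combination -h1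
    rcases mul_eq_zero.mp h with h | h
    · exact sub_eq_zero.mp h
    · exact absurd h hij
  have F3 : ∀ i j, Y i j ≠ 0 → d i * d j = e i := by
    intro i j hij
    have h1 : (D * Y * D) i j = d i * Y i j * d j := by
      rw [mul_diag_apply hD, diag_mul_apply hD]
    have h2 : (E * Y) i j = e i * Y i j := diag_mul_apply hE i j
    rw [rel3, h2] at h1
    have h : (d i * d j - e i) * Y i j = 0 := by linear_combination -h1
    rcases mul_eq_zero.mp h with h | h
    · exact sub_eq_zero.mp h
    · exact absurd h hij
  have F4 : ∀ i j, Y i j ≠ 0 → d i * e j = 1 := by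
    intro i j hij
    have h1 : (D * Y * E) i j = d i * Y i j * e j := by
      rw [mul_diag_apply hE, diag_mul_apply hD]
    rw [rel4] at h1
    have h : (d i * e j - 1) * Y i j = 0 := by linear_combination -h1
    rcases mul_eq_zero.mp h with h | h
    · exact sub_eq_zero.mp h
    · exact absurd h hij
  -- nonvanishing of columns
  have colX : ∀ j, ∃ i, X i j ≠ 0 := by
    intro j
    by_contra hcon
    push_neg at hcon
    obtain ⟨Z, hZ⟩ := hXu.exists_left_inv
    have h1 : (Z * X) j j = 0 := by
      rw [Matrix.mul_apply]
      apply Finset.sum_eq_zero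
      intro x _
      rw [hcon x, mul_zero]
    rw [hZ, Matrix.one_apply_eq] at h1
    exact one_ne_zero h1
  have colY : ∀ j, ∃ i, Y i j ≠ 0 := by
    intro j
    by_contra hcon
    push_neg at hcon
    obtain ⟨Z, hZ⟩ := hYu.exists_left_inv
    have h1 : (Z * Y) j j = 0 := by
      rw [Matrix.mul_apply]
      apply Finset.sum_eq_zero
      intro x _
      rw [hcon x, mul_zero]
    rw [hZ, Matrix.one_apply_eq] at h1
    exact one_ne_zero h1
  -- Case B : two indices have equal type, a third has different type → contradiction
  have caseB : ∀ a b c : Fin 3, a ≠ b → a ≠ c → b ≠ c →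
      d a = d b → e a = e b → ¬ (d a = d c ∧ e a = e c) → False := by
    intro a b c hab hac hbc hdab heab hne
    have step1 : d a * d a = 1 → e a * e a = 1 → False := by
      intro hda hea
      have hda1 : d a = 1 := sq1 _ hda
      have hea1 : e a = 1 := sq1 _ hea
      have hdb1 : d b = 1 := hdab.symm.trans hda1
      have heb1 : e b = 1 := heab.symm.trans hea1
      obtain ⟨i, hi⟩ := colX c
      have h1 := F1 i c hi
      have h2 := F2 i c hi
      have hdc1 : d c = 1 ∧ e c = 1 := by
        rcases fin3_cases a b c i hab hac hbc with hia | hib | hic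
        · rw [hia, hda1, one_mul] at h1
          rw [hia, hea1, one_mul] at h2
          exact ⟨h1, h2⟩
        · rw [hib, hdb1, one_mul] at h1
          rw [hib, heb1, one_mul] at h2
          exact ⟨h1, h2⟩
        · rw [hic] at h1 h2
          exact ⟨sq1 _ h1, sq1 _ h2⟩
      exact hne ⟨hda1.trans hdc1.1.symm, hea1.trans hdc1.2.symm⟩
    obtain ⟨i, hi⟩ := colX a
    rcases fin3_cases a b c i hab hac hbc with hia | hib | hic
    · rw [hia] at hi
      exact step1 (F1 a a hi) (F2 a a hi)
    · rw [hib] at hi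
      have h1 := F1 b a hi
      have h2 := F2 b a hi
      rw [← hdab] at h1
      rw [← heab] at h2
      exact step1 h1 h2
    · rw [hic] at hi
      have hcol_a : ∀ i', X i' a ≠ 0 → i' = c := by
        intro i' hi'
        rcases fin3_cases a b c i' hab hac hbc with h' | h' | h'
        · exfalso
          rw [h'] at hi'
          exact step1 (F1 a a hi') (F2 a a hi')
        · exfalso
          rw [h'] at hi'
          have h1 := F1 b a hi'
          have h2 := F2 b a hi'
          rw [← hdab] at h1
          rw [← heab] at h2
          exact step1 h1 h2
        · exact h'
      have hcol_b : ∀ i', X i' b ≠ 0 → i' = c := by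
        intro i' hi'
        rcases fin3_cases a b c i' hab hac hbc with h' | h' | h'
        · exfalso
          rw [h'] at hi'
          have h1 := F1 a b hi'
          have h2 := F2 a b hi'
          rw [← hdab] at h1
          rw [← heab] at h2
          exact step1 h1 h2
        · exfalso
          rw [h'] at hi'
          have h1 := F1 b b hi'
          have h2 := F2 b b hi'
          rw [← hdab] at h1
          rw [← heab] at h2
          exact step1 h1 h2
        · exact h'
      obtain ⟨i'', hi''⟩ := colX b
      have hXcb : X c b ≠ 0 := by
        have h'' := hcol_b i'' hi''
        rw [h''] at hi''
        exact hi''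
      obtain ⟨Z, hZ⟩ := hXu.exists_left_inv
      have hZaa : (Z * X) a a = Z a c * X c a := by
        rw [Matrix.mul_apply]
        apply Finset.sum_eq_single_of_mem c (Finset.mem_univ c)
        intro x _ hx
        have hx0 : X x a = 0 := by
          by_contra hc
          exact hx (hcol_a x hc)
        rw [hx0, mul_zero]
      have hZab : (Z * X) a b = Z a c * X c b := by
        rw [Matrix.mul_apply]
        apply Finset.sum_eq_single_of_mem c (Finset.mem_univ c)
        intro x _ hx
        have hx0 : X x b = 0 := by
          by_contra hc
          exact hx (hcol_b x hc)
        rw [hx0, mul_zero]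
      rw [hZ, Matrix.one_apply_eq] at hZaa
      rw [hZ, Matrix.one_apply_ne hab] at hZab
      rcases mul_eq_zero.mp hZab.symm with h | h
      · rw [h, zero_mul] at hZaa
        exact one_ne_zero hZaa
      · exact hXcb h
  -- now the main case split
  by_cases h01 : d 0 = d 1 ∧ e 0 = e 1
  · by_cases h02 : d 0 = d 2 ∧ e 0 = e 2
    · -- Case A : all types equal, forces D = 1 and X, Y commute
      have hdall : ∀ i, d i = d 0 := by
        intro i
        fin_cases i
        · rfl
        · exact h01.1.symm
        · exact h02.1.symm
      have heall : ∀ i, e i = e 0 := by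
        intro i
        fin_cases i
        · rfl
        · exact h01.2.symm
        · exact h02.2.symm
      obtain ⟨i, hi⟩ := colX 0
      have hd00 : d 0 * d 0 = 1 := by
        have := F1 i 0 hi; rw [hdall i] at this; exact this
      have he00 : e 0 * e 0 = 1 := by
        have := F2 i 0 hi; rw [heall i] at this; exact this
      have hd1 : ∀ i, d i = 1 := fun i => (hdall i).trans (sq1 _ hd00)
      have hD1 : D = 1 := by
        ext i j
        by_cases hij : i = j
        · subst hij; rw [Matrix.one_apply_eq]; exact hd1 i
        · rw [hD hij, Matrix.one_apply_ne hij]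
      have hXYX : X * Y * X = Y := by
        have hstep : D * Y = Y := by rw [hD1, one_mul]
        rw [hDdef, hY2, mul_assoc (X * Y * X) (Y * Y) Y, mul_assoc Y Y Y, hYYY,
          mul_one] at hstep
        exact hstep
      have hcomm : X * Y = Y * X := by
        calc X * Y = X * Y * X * X := by rw [mul_assoc, hXX, mul_one]
          _ = Y * X := by rw [hXYX]
      have hcen : Algebra.adjoin k ({X, Y} : Set (Matrix (Fin 3) (Fin 3) k)) ≤
          Subalgebra.centralizer k {X, Y} := by
        apply Algebra.adjoin_le
        rintro z hz
        rw [SetLike.mem_coe, Subalgebra.mem_centralizer_iff]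
        rcases Set.mem_insert_iff.mp hz with rfl | hz
        · rintro g hg
          rcases Set.mem_insert_iff.mp hg with rfl | hg
          · rfl
          · rw [Set.mem_singleton_iff] at hg; subst hg; exact hcomm.symm
        · rw [Set.mem_singleton_iff] at hz; subst hz
          rintro g hg
          rcases Set.mem_insert_iff.mp hg with rfl | hg
          · exact hcomm
          · rw [Set.mem_singleton_iff] at hg; subst hg; rfl
      rw [hadj] at hcen
      have hcomm_all : ∀ M : Matrix (Fin 3) (Fin 3) k,
          X * M = M * X ∧ Y * M = M * Y := by
        intro M
        have hM := hcen (show M ∈ ⊤ from trivial)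
        rw [Subalgebra.mem_centralizer_iff] at hM
        exact ⟨hM X (Set.mem_insert _ _), hM Y (Set.mem_insert_of_mem _ rfl)⟩
      have hdiag : ∀ M : Matrix (Fin 3) (Fin 3) k,
          (∀ N, M * N = N * M) → ∀ i j : Fin 3, i ≠ j → M i j = 0 := by
        intro M hM i j hij
        have h := hM (Matrix.single j j (1 : k))
        have h1 : (M * Matrix.single j j (1 : k)) i j = M i j := by
          rw [Matrix.mul_apply]
          rw [Finset.sum_eq_single_of_mem j (Finset.mem_univ j)]
          · rw [Matrix.single_apply_same, mul_one]
          · intro x _ hx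
            rw [Matrix.single_apply_of_ne, mul_zero]
            exact fun h' => hx h'.1.symm
        have h2 : (Matrix.single j j (1 : k) * M) i j = 0 := by
          rw [Matrix.mul_apply]
          apply Finset.sum_eq_zero
          intro x _
          rw [Matrix.single, Matrix.of_apply, if_neg, zero_mul]
          exact fun ⟨h', _⟩ => hij h'.symm
        rw [h, h2] at h1
        exact h1.symm
      have hXdiag := hdiag X (fun N => (hcomm_all N).1)
      have hYdiag := hdiag Y (fun N => (hcomm_all N).2)
      exact final_contra 0 (fun j hj => hXdiag j 0 hj) (fun j hj => hYdiag j 0 hj) hadj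
    · exact caseB 0 1 2 (by decide) (by decide) (by decide) h01.1 h01.2 h02
  · by_cases h02 : d 0 = d 2 ∧ e 0 = e 2
    · exact caseB 0 2 1 (by decide) (by decide) (by decide) h02.1 h02.2 h01
    · by_cases h12 : d 1 = d 2 ∧ e 1 = e 2
      · exact caseB 1 2 0 (by decide) (by decide) (by decide) h12.1 h12.2
          (fun ⟨h1, h2⟩ => h01 ⟨h1.symm, h2.symm⟩)
      · -- Case C : all types distinct
        have hinj : ∀ i j : Fin 3, d i = d j → e i = e j → i = j := by
          have h3 : ∀ i : Fin 3, i = 0 ∨ i = 1 ∨ i = 2 :=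
            fun i => fin3_cases 0 1 2 i (by decide) (by decide) (by decide)
          intro i j hdij heij
          rcases h3 i with rfl | rfl | rfl <;> rcases h3 j with rfl | rfl | rfl
          · rfl
          · exact absurd ⟨hdij, heij⟩ h01
          · exact absurd ⟨hdij, heij⟩ h02
          · exact absurd ⟨hdij.symm, heij.symm⟩ h01
          · rfl
          · exact absurd ⟨hdij, heij⟩ h12
          · exact absurd ⟨hdij.symm, heij.symm⟩ h02
          · exact absurd ⟨hdij.symm, heij.symm⟩ h12
          · rfl
        choose σ hσ using colX
        choose τ hτ using colY
        have hσd : ∀ j, d (σ j) * d j = 1 := fun j => F1 _ _ (hσ j)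
        have hσe : ∀ j, e (σ j) * e j = 1 := fun j => F2 _ _ (hσ j)
        have hσσ : ∀ j, σ (σ j) = j := by
          intro j
          apply hinj
          · have heq : d (σ (σ j)) * d (σ j) = d j * d (σ j) := by
              linear_combination hσd (σ j) - hσd j
            exact mul_right_cancel₀ (hd0 (σ j)) heq
          · have heq : e (σ (σ j)) * e (σ j) = e j * e (σ j) := by
              linear_combination hσe (σ j) - hσe j
            exact mul_right_cancel₀ (he0 (σ j)) heq
        obtain ⟨i₀, hi₀⟩ := fin3_invol σ hσσ
        have hXd : X i₀ i₀ ≠ 0 := by have h := hσ i₀; rwa [hi₀] at h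
        have hd1 : d i₀ = 1 := sq1 _ (F1 _ _ hXd)
        have he1 : e i₀ = 1 := sq1 _ (F2 _ _ hXd)
        have A4 : ∀ j, d (τ j) * e j = 1 := fun j => F4 _ _ (hτ j)
        have B3 : ∀ j, d (τ j) * d j = e (τ j) := fun j => F3 _ _ (hτ j)
        have hτ3 : ∀ j, τ (τ (τ j)) = j := by
          intro j
          have k1 : d (τ (τ (τ j))) * (d (τ (τ j)) * d (τ j)) = 1 := by
            linear_combination A4 (τ (τ j)) + d (τ (τ (τ j))) * B3 (τ j)
          have k2 : d j * (d (τ (τ j)) * d (τ j)) = 1 := by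
            linear_combination A4 (τ j) + d (τ (τ j)) * B3 j
          have hdeq : d (τ (τ (τ j))) = d j :=
            mul_right_cancel₀ (mul_ne_zero (hd0 _) (hd0 _)) (k1.trans k2.symm)
          have k3 : e j * d (τ j) = (d j * d (τ (τ j))) * d (τ j) := by
            linear_combination A4 j - k2
          have heqj : e j = d j * d (τ (τ j)) := mul_right_cancel₀ (hd0 _) k3
          have heeq : e (τ (τ (τ j))) = e j := by
            rw [← B3 (τ (τ j)), hdeq, heqj]
          exact hinj _ _ hdeq heeq
        have hτfix : τ i₀ = i₀ := by
          apply hinj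
          · have := A4 i₀
            rw [he1, mul_one] at this
            rw [this, hd1]
          · have h := B3 i₀
            have := A4 i₀
            rw [he1, mul_one] at this
            rw [← h, this, hd1, one_mul, he1]
        have hτid : ∀ j, τ j = j := fin3_cube τ hτ3 i₀ hτfix
        have hYdiag : ∀ i j, Y i j ≠ 0 → i = j := by
          intro i j hij
          have hjj : Y j j ≠ 0 := by have h := hτ j; rwa [hτid j] at h
          have hdjj : d j * e j = 1 := F4 j j hjj
          have hejj : d j * d j = e j := F3 j j hjj
          apply hinj
          · have h1 := F4 i j hij
            have heq : d i * e j = d j * e j := by linear_combination h1 - hdjj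
            exact mul_right_cancel₀ (he0 j) heq
          · have h2 := F3 i j hij
            have h1 := F4 i j hij
            have hdieq : d i = d j := by
              have heq : d i * e j = d j * e j := by linear_combination h1 - hdjj
              exact mul_right_cancel₀ (he0 j) heq
            rw [← h2, hdieq, hejj]
        have hXcol : ∀ j, j ≠ i₀ → X j i₀ = 0 := by
          intro j hj
          by_contra hne0
          apply hj
          apply hinj
          · have h1 := F1 j i₀ hne0
            rw [hd1, mul_one] at h1
            rw [h1, hd1]
          · have h2 := F2 j i₀ hne0
            rw [he1, mul_one] at h2
            rw [h2, he1]
        have hYcol : ∀ j, j ≠ i₀ → Y j i₀ = 0 := by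
          intro j hj
          by_contra hne0
          exact hj (hYdiag j i₀ hne0)
        exact final_contra i₀ hXcol hYcol hadj
end

section
/- Let X, Y ∈ GL_n(k) with X² = Y³ = I, and suppose Λ = XYXY² and Γ = XY²XY are diagonal with Λ² = I. Then with A = XY and B = YX, one has A³ = B³, ABA = BAB, and A⁶ = B⁶ = I. -/
open Matrix

private lemma diag_comm {k : Type*} [Field k] {n : ℕ} {A B : Matrix (Fin n) (Fin n) k}
    (hA : A.IsDiag) (hB : B.IsDiag) : A * B = B * A := by
  rw [← hA.diagonal_diag, ← hB.diagonal_diag, diagonal_mul_diagonal, diagonal_mul_diagonal]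
  exact congrArg Matrix.diagonal (funext fun i => mul_comm _ _)

private lemma inv_unique' {M : Type*} [Monoid M] {P Q R : M} (h1 : P * Q = 1)
    (h2 : R * P = 1) : R = Q := by
  calc R = R * (P * Q) := by rw [h1, mul_one]
  _ = (R * P) * Q := by rw [mul_assoc]
  _ = Q := by rw [h2, one_mul]

theorem stmt_14 {k : Type*} [Field k] {n : ℕ}
    (X Y : Matrix (Fin n) (Fin n) k) (hX : IsUnit X) (hY : IsUnit Y)
    (hX2 : X ^ 2 = 1) (hY3 : Y ^ 3 = 1)
    (hΛ : (X * Y * X * Y ^ 2).IsDiag) (hΓ : (X * Y ^ 2 * X * Y).IsDiag)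
    (hΛ2 : (X * Y * X * Y ^ 2) ^ 2 = 1) :
    (X * Y) ^ 3 = (Y * X) ^ 3 ∧
    (X * Y) * (Y * X) * (X * Y) = (Y * X) * (X * Y) * (Y * X) ∧
    (X * Y) ^ 6 = 1 ∧ (Y * X) ^ 6 = 1 := by
  have hXX1 : X * X = 1 := by rw [← pow_two, hX2]
  have hY3l : Y * Y * Y = 1 := by rw [← hY3, pow_succ, pow_succ, pow_one]
  have hXX : ∀ M : Matrix (Fin n) (Fin n) k, X * (X * M) = M := by
    intro M; rw [← mul_assoc, hXX1, one_mul]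
  have hYY : ∀ M : Matrix (Fin n) (Fin n) k, Y * (Y * (Y * M)) = M := by
    intro M; rw [← mul_assoc, ← mul_assoc, hY3l, one_mul]
  have hYY1 : Y * (Y * Y) = 1 := by rw [← mul_assoc, hY3l]
  set L := X * Y * X * Y ^ 2 with hLdef
  set G := X * Y ^ 2 * X * Y with hGdef
  have hL2 : L * L = 1 := by rw [← pow_two]; exact hΛ2
  have hLL : ∀ M : Matrix (Fin n) (Fin n) k, L * (L * M) = M := by
    intro M; rw [← mul_assoc, hL2, one_mul]
  have hLw : L = X * (Y * (X * (Y * Y))) := by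
    rw [hLdef, pow_two]; simp only [mul_assoc]
  have hGw : G = X * (Y * (Y * (X * Y))) := by
    rw [hGdef, pow_two]; simp only [mul_assoc]
  -- M := Y X Y Y X equals L
  have hML : (Y * (X * (Y * (Y * X)))) * L = 1 := by
    rw [hLw]; simp only [mul_assoc, hXX, hYY, hXX1, hYY1, mul_one]
  have hMeq : Y * (X * (Y * (Y * X))) = L := inv_unique' hL2 hML
  have hXLX : X * (L * X) = L := by
    have h1 : X * (L * X) = Y * (X * (Y * (Y * X))) := by
      rw [hLw]; simp only [mul_assoc, hXX]
    rw [h1, hMeq]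
  have hXL : X * L = L * X := by
    have h : X * L = X * (L * X) * X := by
      rw [mul_assoc, mul_assoc, hXX1, mul_one]
    rw [h, hXLX]
  -- N := Y Y X Y X equals G
  have hNw : Y * (Y * (X * (Y * X))) = Y * (Y * (L * Y)) := by
    rw [hLw]; simp only [mul_assoc, hXX, hYY, hXX1, hYY1, mul_one]
  have hNN : (Y * (Y * (X * (Y * X)))) * (Y * (Y * (X * (Y * X)))) = 1 := by
    rw [hNw]; simp only [mul_assoc, hYY, hLL, hYY1, mul_one]
  have hGN1 : G * (Y * (Y * (X * (Y * X)))) = 1 := by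
    rw [hGw]; simp only [mul_assoc, hXX, hYY, hXX1, hYY1, mul_one]
  have hGeqN : G = Y * (Y * (X * (Y * X))) := inv_unique' hNN hGN1
  have hGG : G * G = 1 := by rw [hGeqN]; exact hNN
  have hXGX : X * (G * X) = G := by
    have h1 : X * (G * X) = Y * (Y * (X * (Y * X))) := by
      rw [hGw]; simp only [mul_assoc, hXX]
    rw [h1, ← hGeqN]
  have hXG : X * G = G * X := by
    have h : X * G = X * (G * X) * X := by
      rw [mul_assoc, mul_assoc, hXX1, mul_one]
    rw [h, hXGX]
  have hLG : L * G = G * L := diag_comm hΛ hΓ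
  -- A³ = L * (X * G) = L * (G * X)
  have hA3 : (X * Y) ^ 3 = L * (X * G) := by
    rw [hLw, hGw, pow_succ, pow_succ, pow_one]
    simp only [mul_assoc, hXX, hYY, hXX1, hYY1, mul_one]
  have hA3' : (X * Y) ^ 3 = L * (G * X) := by rw [hA3, hXG]
  have hB3 : (Y * X) ^ 3 = X * ((X * Y) ^ 3 * X) := by
    rw [pow_succ, pow_succ, pow_one, pow_succ, pow_succ, pow_one]
    simp only [mul_assoc, hXX, hYY, hXX1, hYY1, mul_one]
  have e1 : X * ((L * (G * X)) * X) = L * (G * X) := by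
    calc X * ((L * (G * X)) * X) = X * (L * (G * (X * X))) := by
          rw [mul_assoc L (G * X) X, mul_assoc G X X]
    _ = X * (L * G) := by rw [hXX1, mul_one]
    _ = L * (X * G) := by rw [← mul_assoc, hXL, mul_assoc]
    _ = L * (G * X) := by rw [hXG]
  have hAB : (X * Y) ^ 3 = (Y * X) ^ 3 := by rw [hB3, hA3', e1]
  have h2 : X * (L * (G * X)) = L * G := by
    rw [← mul_assoc X L, hXL, mul_assoc L X, ← mul_assoc X G, hXG,
      mul_assoc G X X, hXX1, mul_one]
  have hA6 : (X * Y) ^ 6 = 1 := by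
    rw [show (6 : ℕ) = 3 + 3 from rfl, pow_add, hA3']
    rw [mul_assoc L (G * X), mul_assoc G X, h2]
    rw [← mul_assoc G L, ← hLG, mul_assoc L G G, hGG, mul_one, hL2]
  have hB6 : (Y * X) ^ 6 = 1 := by
    rw [show (6 : ℕ) = 3 * 2 from rfl, pow_mul, ← hAB, ← pow_mul]
    exact hA6
  have hABA : (X * Y) * (Y * X) * (X * Y) = X := by
    simp only [mul_assoc, hXX, hYY, hXX1, hYY1, mul_one]
  have hBAB : (Y * X) * (X * Y) * (Y * X) = X := by
    simp only [mul_assoc, hXX, hYY, hXX1, hYY1, mul_one]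
  exact ⟨hAB, by rw [hABA, hBAB], hA6, hB6⟩
end

section
/- Let A, B ∈ M_n(k) satisfy A² = B², ABA = BAB, and A⁶ = B⁶ = I. Then the k-subalgebra of M_n(k) generated by A and B has dimension at most 18. -/
open Matrix

set_option maxHeartbeats 1000000

theorem stmt_16 {k : Type*} [Field k] {n : ℕ}
    (A B : Matrix (Fin n) (Fin n) k)
    (h2 : A ^ 2 = B ^ 2) (hbraid : A * B * A = B * A * B)
    (hA6 : A ^ 6 = 1) (hB6 : B ^ 6 = 1) :
    Module.finrank k (Algebra.adjoin k ({A, B} : Set (Matrix (Fin n) (Fin n) k))) ≤ 18 := by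
  classical
  obtain ⟨Z, hZ⟩ : ∃ Z, Z = A ^ 2 := ⟨A ^ 2, rfl⟩
  have hAA : A * A = Z := by rw [hZ, sq]
  have hBB : B * B = Z := by rw [hZ, h2, sq]
  have hZ3 : Z ^ 3 = 1 := by rw [hZ, ← pow_mul]; exact hA6
  have hZA : Z * A = A * Z := by rw [hZ, sq]; noncomm_ring
  have hZB : Z * B = B * Z := by rw [hZ, h2, sq]; noncomm_ring
  -- the six "S3 words"
  obtain ⟨w, hw⟩ : ∃ w : Fin 6 → Matrix (Fin n) (Fin n) k,
      w = ![1, A, B, A * B, B * A, A * B * A] := ⟨_, rfl⟩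
  obtain ⟨g, hg⟩ : ∃ g : Fin 3 × Fin 6 → Matrix (Fin n) (Fin n) k,
      g = fun p => Z ^ (p.1 : ℕ) * w p.2 := ⟨_, rfl⟩
  have hmod : ∀ m : ℕ, Z ^ m = Z ^ (m % 3) := by
    intro m
    conv_lhs => rw [← Nat.div_add_mod m 3]
    rw [pow_add, pow_mul, hZ3, one_pow, one_mul]
  -- right multiplication tables
  have tblA : ∀ j : Fin 6, ∃ e : ℕ, ∃ j' : Fin 6, w j * A = Z ^ e * w j' := by
    intro j
    fin_cases j
    · exact ⟨0, 1, by simp [hw]⟩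
    · exact ⟨1, 0, by simp [hw, hAA]⟩
    · exact ⟨0, 4, by simp [hw]⟩
    · refine ⟨0, 5, ?_⟩
      simp only [hw]
      show A * B * A = Z ^ 0 * (A * B * A)
      rw [pow_zero, one_mul]
    · exact ⟨1, 2, by simp [hw, pow_one, mul_assoc, hAA, ← hZB]⟩
    · refine ⟨1, 3, ?_⟩
      simp only [hw]
      show A * B * A * A = Z ^ 1 * (A * B)
      rw [pow_one, mul_assoc (A * B), hAA]
      calc A * B * Z = A * (B * Z) := by rw [mul_assoc]
        _ = A * (Z * B) := by rw [hZB]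
        _ = A * Z * B := by rw [mul_assoc]
        _ = Z * A * B := by rw [hZA]
        _ = Z * (A * B) := by rw [mul_assoc]
  have tblB : ∀ j : Fin 6, ∃ e : ℕ, ∃ j' : Fin 6, w j * B = Z ^ e * w j' := by
    intro j
    fin_cases j
    · exact ⟨0, 2, by simp [hw]⟩
    · exact ⟨0, 3, by simp [hw]⟩
    · exact ⟨1, 0, by simp [hw, hBB]⟩
    · exact ⟨1, 1, by simp [hw, pow_one, mul_assoc, hBB, ← hZA]⟩
    · exact ⟨0, 5, by simpa [hw] using hbraid.symm⟩
    · refine ⟨1, 4, ?_⟩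
      simp only [hw]
      show A * B * A * B = Z ^ 1 * (B * A)
      rw [pow_one, hbraid, mul_assoc (B * A), hBB]
      calc B * A * Z = B * (A * Z) := by rw [mul_assoc]
        _ = B * (Z * A) := by rw [hZA]
        _ = B * Z * A := by rw [mul_assoc]
        _ = Z * B * A := by rw [hZB]
        _ = Z * (B * A) := by rw [mul_assoc]
  -- closure of range g under right multiplication
  have step : ∀ x ∈ Set.range g,
      ∀ y ∈ ({A, B} : Set (Matrix (Fin n) (Fin n) k)), x * y ∈ Set.range g := by
    rintro x ⟨⟨i, j⟩, rfl⟩ y hy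
    have main : ∀ e : ℕ, ∀ j' : Fin 6, w j * y = Z ^ e * w j' →
        g (i, j) * y ∈ Set.range g := by
      intro e j' hwj
      refine ⟨(⟨((i : ℕ) + e) % 3, Nat.mod_lt _ (by norm_num)⟩, j'), ?_⟩
      simp only [hg]
      show Z ^ (((i : ℕ) + e) % 3) * w j' = Z ^ (i : ℕ) * w j * y
      rw [← hmod, pow_add, mul_assoc, ← hwj, mul_assoc]
    rcases hy with rfl | hy
    · obtain ⟨e, j', h⟩ := tblA j
      exact main e j' h
    · rcases hy with rfl
      obtain ⟨e, j', h⟩ := tblB j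
      exact main e j' h
  have hone : (1 : Matrix (Fin n) (Fin n) k) ∈ Set.range g := ⟨(0, 0), by simp [hg, hw]⟩
  have hsub : (Submonoid.closure ({A, B} : Set (Matrix (Fin n) (Fin n) k)) :
      Set (Matrix (Fin n) (Fin n) k)) ⊆ Set.range g := by
    intro x hx
    induction hx using Submonoid.closure_induction_right with
    | one => exact hone
    | mul_right x hx y hy ih => exact step x ih y hy
  have hle : Subalgebra.toSubmodule
        (Algebra.adjoin k ({A, B} : Set (Matrix (Fin n) (Fin n) k))) ≤
      Submodule.span k (Set.range g) := by
    rw [Algebra.adjoin_eq_span]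
    exact Submodule.span_mono hsub
  have h1 : Module.finrank k (Algebra.adjoin k ({A, B} : Set (Matrix (Fin n) (Fin n) k))) ≤
      Module.finrank k (Submodule.span k (Set.range g)) :=
    Submodule.finrank_mono hle
  refine h1.trans ?_
  have hset : Set.range g = ↑(Finset.image g Finset.univ) := by
    simp
  rw [hset]
  refine (finrank_span_finset_le_card (R := k) (Finset.image g Finset.univ)).trans ?_
  exact Finset.card_image_le.trans (by simp)
end

section
/- Let X, Y ∈ GL_n(k) with X² = Y³ = I, Λ = XYXY² diagonal, Γ = XY²XY diagonal, and suppose Λ + Λ⁻¹ = Γ + Γ⁻¹ is a scalar matrix and (YX)⁶ = I. Then (YX)((YX)² − (XY)²)(XY − YX) = 0. -/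
open Matrix

theorem stmt_17 {k : Type*} [Field k] {n : ℕ}
    (X Y : Matrix (Fin n) (Fin n) k) (hX : IsUnit X) (hY : IsUnit Y)
    (hX2 : X ^ 2 = 1) (hY3 : Y ^ 3 = 1)
    (hΛ : (X * Y * X * Y ^ 2).IsDiag) (hΓ : (X * Y ^ 2 * X * Y).IsDiag)
    (l : k)
    (hΛs : (X * Y * X * Y ^ 2) + (X * Y * X * Y ^ 2)⁻¹
         = (l + l⁻¹) • (1 : Matrix (Fin n) (Fin n) k))
    (hΓs : (X * Y ^ 2 * X * Y) + (X * Y ^ 2 * X * Y)⁻¹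
         = (l + l⁻¹) • (1 : Matrix (Fin n) (Fin n) k))
    (h6 : (Y * X) ^ 6 = 1) :
    (Y * X) * ((Y * X) ^ 2 - (X * Y) ^ 2) * (X * Y - Y * X) = 0 := by
  -- basic word rules
  have hx : X * X = 1 := by rw [← pow_two]; exact hX2
  have hy : Y * (Y * Y) = 1 := by
    rw [← mul_assoc, ← pow_two, ← pow_succ]; exact hY3
  have rX : ∀ M : Matrix (Fin n) (Fin n) k, X * (X * M) = M := fun M => by
    rw [← mul_assoc, hx, one_mul]
  have rY : ∀ M : Matrix (Fin n) (Fin n) k, Y * (Y * (Y * M)) = M := fun M => by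
    rw [← mul_assoc, ← mul_assoc, mul_assoc Y Y Y, hy, one_mul]
  -- word identities
  have hB1 : (X * Y * X * Y ^ 2) * (Y * X) = X * Y := by
    simp only [pow_two, mul_assoc, rX, rY, hx, hy, mul_one, one_mul]
  have hB2 : (Y * X) * (X * Y ^ 2 * X * Y) = X * Y := by
    simp only [pow_two, mul_assoc, rX, rY, hx, hy, mul_one, one_mul]
  have hW2 : (X * Y ^ 2 * X * Y) * ((Y * X) * (X * Y * X * Y ^ 2)) = X * Y := by
    simp only [pow_two, mul_assoc, rX, rY, hx, hy, mul_one, one_mul]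
  set A := Y * X with hA
  set L := X * Y * X * Y ^ 2 with hL
  set G := X * Y ^ 2 * X * Y with hG
  -- units
  have uA : IsUnit A := by rw [hA]; exact hY.mul hX
  have uL : IsUnit L := by rw [hL]; exact (((hX.mul hY).mul hX).mul (hY.pow 2))
  have uG : IsUnit G := by rw [hG]; exact (((hX.mul (hY.pow 2)).mul hX).mul hY)
  have dA := (Matrix.isUnit_iff_isUnit_det A).mp uA
  have dL := (Matrix.isUnit_iff_isUnit_det L).mp uL
  have dG := (Matrix.isUnit_iff_isUnit_det G).mp uG
  have hAAi : A * A⁻¹ = 1 := Matrix.mul_nonsing_inv A dA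
  have hLLi : L * L⁻¹ = 1 := Matrix.mul_nonsing_inv L dL
  have hLiL : L⁻¹ * L = 1 := Matrix.nonsing_inv_mul L dL
  have hGGi : G * G⁻¹ = 1 := Matrix.mul_nonsing_inv G dG
  have hGiG : G⁻¹ * G = 1 := Matrix.nonsing_inv_mul G dG
  -- cancellation rules
  have cancelLLi : ∀ M : Matrix (Fin n) (Fin n) k, L * (L⁻¹ * M) = M := fun M => by
    rw [← mul_assoc, hLLi, one_mul]
  have cancelLiL : ∀ M : Matrix (Fin n) (Fin n) k, L⁻¹ * (L * M) = M := fun M => by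
    rw [← mul_assoc, hLiL, one_mul]
  have cancelGGi : ∀ M : Matrix (Fin n) (Fin n) k, G * (G⁻¹ * M) = M := fun M => by
    rw [← mul_assoc, hGGi, one_mul]
  have cancelGiG : ∀ M : Matrix (Fin n) (Fin n) k, G⁻¹ * (G * M) = M := fun M => by
    rw [← mul_assoc, hGiG, one_mul]
  -- diagonal matrices commute
  have Dg : L * G = G * L := by
    rw [← hΛ.diagonal_diag, ← hΓ.diagonal_diag, diagonal_mul_diagonal,
      diagonal_mul_diagonal]
    exact congrArg diagonal (funext fun i => mul_comm _ _)
  -- commutation with inverses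
  have swap : ∀ P Q : Matrix (Fin n) (Fin n) k, P * Q = Q * P → Q * Q⁻¹ = 1 →
      Q⁻¹ * Q = 1 → Q⁻¹ * P = P * Q⁻¹ := by
    intro P Q hc h1 h2
    calc Q⁻¹ * P = Q⁻¹ * (P * (Q * Q⁻¹)) := by rw [h1, mul_one]
      _ = Q⁻¹ * ((P * Q) * Q⁻¹) := by rw [mul_assoc]
      _ = Q⁻¹ * ((Q * P) * Q⁻¹) := by rw [hc]
      _ = (Q⁻¹ * Q) * (P * Q⁻¹) := by rw [← mul_assoc, ← mul_assoc, mul_assoc]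
      _ = P * Q⁻¹ := by rw [h2, one_mul]
  have cGiL : G⁻¹ * L = L * G⁻¹ := swap L G Dg hGGi hGiG
  have cLiG : L⁻¹ * G = G * L⁻¹ := swap G L Dg.symm hLLi hLiL
  have cGiLi : G⁻¹ * L⁻¹ = L⁻¹ * G⁻¹ := swap L⁻¹ G cLiG hGGi hGiG
  -- quadratics
  have q1 : L * L + 1 = (l + l⁻¹) • L := by
    have h := congrArg (fun M => L * M) hΛs
    simpa [mul_add, hLLi, mul_smul_comm, mul_one] using h
  have q2 : G * G + 1 = (l + l⁻¹) • G := by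
    have h := congrArg (fun M => G * M) hΓs
    simpa [mul_add, hGGi, mul_smul_comm, mul_one] using h
  -- key multiplicative identities
  have hW1 : A * G = L * A := hB2.trans hB1.symm
  have hW2' : G * (A * L) = L * A := hW2.trans hB1.symm
  have hAL : A * L = G⁻¹ * (L * A) := by
    rw [← hW2', cancelGiG]
  have hAGi : A * G⁻¹ = L⁻¹ * A := by
    calc A * G⁻¹ = L⁻¹ * (L * (A * G⁻¹)) := (cancelLiL _).symm
      _ = L⁻¹ * ((L * A) * G⁻¹) := by rw [mul_assoc L A G⁻¹]
      _ = L⁻¹ * ((A * G) * G⁻¹) := by rw [hW1]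
      _ = L⁻¹ * A := by rw [mul_assoc, hGGi, mul_one]
  have hALi : A * L⁻¹ = L⁻¹ * (G * A) := by
    calc A * L⁻¹ = L⁻¹ * (L * (A * L⁻¹)) := (cancelLiL _).symm
      _ = L⁻¹ * ((L * A) * L⁻¹) := by rw [mul_assoc L A L⁻¹]
      _ = L⁻¹ * ((G * (A * L)) * L⁻¹) := by rw [hW2']
      _ = L⁻¹ * (G * (A * (L * L⁻¹))) := by rw [mul_assoc G (A * L) L⁻¹, mul_assoc A L L⁻¹]
      _ = L⁻¹ * (G * A) := by rw [hLLi, mul_one]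
  -- push rules
  have P3M : ∀ M : Matrix (Fin n) (Fin n) k, A * (G * M) = L * (A * M) := fun M => by
    rw [← mul_assoc, hW1, mul_assoc]
  have P1M : ∀ M : Matrix (Fin n) (Fin n) k, A * (L * M) = G⁻¹ * (L * (A * M)) := fun M => by
    rw [← mul_assoc, hAL, mul_assoc, mul_assoc]
  have P2M : ∀ M : Matrix (Fin n) (Fin n) k, A * (G⁻¹ * M) = L⁻¹ * (A * M) := fun M => by
    rw [← mul_assoc, hAGi, mul_assoc]
  have P4M : ∀ M : Matrix (Fin n) (Fin n) k, A * (L⁻¹ * M) = L⁻¹ * (G * (A * M)) := fun M => by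
    rw [← mul_assoc, hALi, mul_assoc, mul_assoc]
  -- sorting rules
  have commGL : ∀ M : Matrix (Fin n) (Fin n) k, G * (L * M) = L * (G * M) := fun M => by
    rw [← mul_assoc, ← Dg, mul_assoc]
  have commGiL : ∀ M : Matrix (Fin n) (Fin n) k, G⁻¹ * (L * M) = L * (G⁻¹ * M) := fun M => by
    rw [← mul_assoc, cGiL, mul_assoc]
  have commGLi : ∀ M : Matrix (Fin n) (Fin n) k, G * (L⁻¹ * M) = L⁻¹ * (G * M) := fun M => by
    rw [← mul_assoc, ← cLiG, mul_assoc]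
  have commGiLi : ∀ M : Matrix (Fin n) (Fin n) k, G⁻¹ * (L⁻¹ * M) = L⁻¹ * (G⁻¹ * M) := fun M => by
    rw [← mul_assoc, cGiLi, mul_assoc]
  -- the scalar identity e3 : L*G*G + L = L*L + G*G
  have r1 : A * (L * L) + A = (l + l⁻¹) • (A * L) := by
    have h := congrArg (fun M => A * M) q1
    simpa [mul_add, mul_one, mul_smul_comm] using h
  have r2 : (L * A) * L + G * A = (l + l⁻¹) • (L * A) := by
    have h := congrArg (fun M => G * M) r1
    simp only [mul_add, mul_smul_comm] at h
    have e : G * (A * (L * L)) = (L * A) * L := by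
      rw [← mul_assoc A L L, ← mul_assoc G (A * L) L, hW2']
    rw [e, hW2'] at h
    exact h
  have r3 : (L * L + G * G) * A = ((l + l⁻¹) • (L * G)) * A := by
    have h := congrArg (fun M => G * M) r2
    simp only [mul_add, mul_smul_comm] at h
    have e1 : G * ((L * A) * L) = (L * L) * A := by
      calc G * ((L * A) * L) = G * (L * (A * L)) := by rw [mul_assoc L A L]
        _ = L * (G * (A * L)) := commGL _
        _ = L * (L * A) := by rw [hW2']
        _ = (L * L) * A := by rw [mul_assoc L L A]
    have e2 : G * (L * A) = (L * G) * A := by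
      rw [← mul_assoc, ← Dg]
    rw [e1, e2, ← mul_assoc G G A] at h
    rw [add_mul, smul_mul_assoc]
    exact h
  have cancelA : ∀ P Q : Matrix (Fin n) (Fin n) k, P * A = Q * A → P = Q := by
    intro P Q h
    have h2 := congrArg (fun M => M * A⁻¹) h
    simpa [mul_assoc, hAAi] using h2
  have D : L * L + G * G = (l + l⁻¹) • (L * G) := cancelA _ _ r3
  have e3 : L * (G * G) + L = L * L + G * G := by
    have h : L * (G * G) + L = (l + l⁻¹) • (L * G) := by
      have h' := congrArg (fun M => L * M) q2
      simpa [mul_add, mul_one, mul_smul_comm] using h'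
    exact h.trans D.symm
  -- main computation
  have expand : A * ((A * A) - (L * A) * (A * G)) * ((A * G) - A)
      = A * (A * (A * (A * G))) - A * (A * (A * A))
        - A * (L * (A * (A * (G * (A * G))))) + A * (L * (A * (A * (G * A)))) := by
    noncomm_ring
  have key : G * (G * (L * (A * ((A * A) - (L * A) * (A * G)) * ((A * G) - A)))) = 0 := by
    rw [expand]
    simp only [mul_sub, mul_add, P1M, P2M, P3M, P4M, hW1, hAL, hAGi, hALi,
      commGL, commGiL, commGLi, commGiLi, cancelLLi, cancelLiL, cancelGGi, cancelGiG,
      mul_assoc]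
    have e4 := congrArg (fun M => M * (A * (A * (A * A)))) e3
    simp only [add_mul, mul_assoc] at e4
    rw [sub_sub, e4]
    abel
  have Ebig0 : A * ((A * A) - (L * A) * (A * G)) * ((A * G) - A) = 0 := by
    have h := congrArg (fun M => L⁻¹ * (G⁻¹ * (G⁻¹ * M))) key
    simp only [cancelGiG, cancelLiL, mul_zero] at h
    exact h
  rw [pow_two, pow_two, ← hB2]
  nth_rewrite 1 [hW1]
  exact Ebig0
end

section
/- Let k have characteristic ≠ 2, and let X', Y' be the 6×6 matrices of the standard family with parameters c₁ = c₂ = −1 (X' block-diagonal with three swap blocks; Y' with nonzero entries Y'_{1,5}=−1, Y'_{2,6}=1, Y'_{3,1}=−1, Y'_{4,2}=1, Y'_{5,3}=−1, Y'_{6,4}=1). Then (X',Y') does not generate M_6(k) as a k-algebra. -/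
open Matrix

private lemma cons_val_five' {α : Type*} {n : ℕ} (x : α)
    (u : Fin n.succ.succ.succ.succ.succ → α) :
    vecCons x u 5 = vecHead (vecTail (vecTail (vecTail (vecTail u)))) := rfl

set_option maxHeartbeats 1600000 in
theorem stmt_19 {k : Type*} [Field k] (hchar : (2 : k) ≠ 0) :
    let X' : Matrix (Fin 6) (Fin 6) k :=
      !![0, 1, 0, 0, 0, 0;
         1, 0, 0, 0, 0, 0;
         0, 0, 0, 1, 0, 0;
         0, 0, 1, 0, 0, 0;
         0, 0, 0, 0, 0, 1;
         0, 0, 0, 0, 1, 0]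
    let Y' : Matrix (Fin 6) (Fin 6) k :=
      !![0, 0, 0, 0, -1, 0;
         0, 0, 0, 0, 0, 1;
         -1, 0, 0, 0, 0, 0;
         0, 1, 0, 0, 0, 0;
         0, 0, -1, 0, 0, 0;
         0, 0, 0, 1, 0, 0]
    Algebra.adjoin k ({X', Y'} : Set (Matrix (Fin 6) (Fin 6) k)) ≠ ⊤ := by
  intro X' Y'
  set M : Matrix (Fin 6) (Fin 6) k :=
    !![0, 0, 0, 0, 1, 0;
       0, 0, 0, 0, 0, 1;
       1, 0, 0, 0, 0, 0;
       0, 1, 0, 0, 0, 0;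
       0, 0, 1, 0, 0, 0;
       0, 0, 0, 1, 0, 0] with hM
  have hMX : M * X' = X' * M := by
    ext i j
    fin_cases i <;> fin_cases j <;>
      simp [hM, X', Matrix.mul_apply, Fin.sum_univ_succ, cons_val_five']
  have hMY : M * Y' = Y' * M := by
    ext i j
    fin_cases i <;> fin_cases j <;>
      simp [hM, Y', Matrix.mul_apply, Fin.sum_univ_succ, cons_val_five']
  have hcomm : ∀ A ∈ Algebra.adjoin k ({X', Y'} : Set (Matrix (Fin 6) (Fin 6) k)),
      M * A = A * M := by
    intro A hA
    induction hA using Algebra.adjoin_induction with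
    | mem x hx =>
        rcases hx with h | h
        · rw [h]; exact hMX
        · rw [Set.mem_singleton_iff] at h; rw [h]; exact hMY
    | algebraMap r => exact (Algebra.commutes r M).symm
    | add x y _ _ hx hy => rw [mul_add, add_mul, hx, hy]
    | mul x y _ _ hx hy => rw [← mul_assoc, hx, mul_assoc, hy, mul_assoc]
  intro htop
  have hE : (Matrix.single 0 0 1 : Matrix (Fin 6) (Fin 6) k) ∈
      Algebra.adjoin k ({X', Y'} : Set (Matrix (Fin 6) (Fin 6) k)) := by
    rw [htop]; exact Algebra.mem_top
  have h := hcomm _ hE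
  have h20 := congr_fun (congr_fun h 2) 0
  simp [hM, Matrix.mul_apply, Fin.sum_univ_succ, cons_val_five',
    Matrix.single] at h20
end
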